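/- arXiv:2101.03727 — 4 statements merged into one kernel-verified Lean document; each statement's English description precedes it below -/
import Mathlib

section
/- Let V be a real Hilbert space and F : V → V* a Fréchet differentiable map. Let û ∈ V and suppose F'[û] is invertible with ‖F'[û]⁻¹ F[û]‖_V ≤ α. Suppose D is an open set containing the closed ball B(û, 2α) and ‖F'[û]⁻¹ (F'[v] − F'[w])‖ ≤ ω ‖v − w‖_V for all v, w ∈ D. If αω ≤ 1/2, then the equation F[u] = 0 has a unique solution u in the closed ball B(û, ρ), where ρ = (1 − √(1 − 2αω))/ω. -/
open Metric Set Filter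

lemma mvt_poly' {W : Type*} [NormedAddCommGroup W] [NormedSpace ℝ W]
    {f : ℝ → W} {f' : ℝ → W} {c0 c1 c2 : ℝ}
    (hf : ∀ s ∈ Set.Icc (0:ℝ) 1, HasDerivAt f (f' s) s)
    (hb : ∀ s ∈ Set.Icc (0:ℝ) 1, ‖f' s‖ ≤ c0 + c1 * s + c2 * s ^ 2) :
    ‖f 1 - f 0‖ ≤ c0 + c1 / 2 + c2 / 3 := by
  set g := fun s : ℝ => f s - f 0 with hg
  set B := fun s : ℝ => c0 * s + c1 * s ^ 2 / 2 + c2 * s ^ 3 / 3 with hBdef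
  have hB : ∀ x : ℝ, HasDerivAt B (c0 + c1 * x + c2 * x ^ 2) x := by
    intro x
    have h1 : HasDerivAt (fun s : ℝ => c0 * s) c0 x := by
      simpa using (hasDerivAt_id x).const_mul c0
    have h2 : HasDerivAt (fun s : ℝ => c1 * s ^ 2 / 2) (c1 * x) x := by
      have := ((hasDerivAt_pow 2 x).const_mul c1).div_const 2
      refine this.congr_deriv ?_; push_cast; ring
    have h3 : HasDerivAt (fun s : ℝ => c2 * s ^ 3 / 3) (c2 * x ^ 2) x := by
      have := ((hasDerivAt_pow 3 x).const_mul c2).div_const 3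
      refine this.congr_deriv ?_; push_cast; ring
    exact (h1.add h2).add h3
  have hcont : ContinuousOn g (Icc 0 1) := fun s hs =>
    ((hf s hs).continuousAt.continuousWithinAt).sub continuousWithinAt_const
  have hg' : ∀ s ∈ Ico (0:ℝ) 1, HasDerivWithinAt g (f' s) (Ici s) s := fun s hs =>
    ((hf s ⟨hs.1, hs.2.le⟩).sub_const (f 0)).hasDerivWithinAt
  have ha : ‖g 0‖ ≤ B 0 := by simp [hg, hBdef]
  have := image_norm_le_of_norm_deriv_right_le_deriv_boundary hcont hg' ha hB
    (fun s hs => hb s ⟨hs.1, hs.2.le⟩) (right_mem_Icc.2 zero_le_one)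
  simpa [hg, hBdef] using this.trans_eq (by ring)

set_option maxHeartbeats 4000000 in
/-- Newton–Kantorovich theorem in a real Hilbert space: if `F'[uh]` is invertible,
`‖F'[uh]⁻¹ F[uh]‖ ≤ α`, `F'[uh]⁻¹ ∘ (F'[v] - F'[w])` is `ω`-Lipschitz on an open set `D`
containing the closed ball `B(uh, 2α)`, and `αω ≤ 1/2`, then `F[u] = 0` has a unique
solution in the closed ball `B(uh, ρ)` with `ρ = (1 - √(1 - 2αω))/ω`. -/
theorem stmt_0
    {V : Type*} [NormedAddCommGroup V] [InnerProductSpace ℝ V] [CompleteSpace V]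
    (F : V → StrongDual ℝ V) (F' : V → V →L[ℝ] StrongDual ℝ V)
    (D : Set V) (hD : IsOpen D)
    (hdiff : ∀ u ∈ D, HasFDerivAt F (F' u) u)
    (uh : V) (huhD : uh ∈ D)
    (Finv : StrongDual ℝ V →L[ℝ] V)
    (hlinv : ∀ v : V, Finv (F' uh v) = v)
    (hrinv : ∀ φ : StrongDual ℝ V, F' uh (Finv φ) = φ)
    (α ω : ℝ) (hα : 0 < α) (hω : 0 < ω)
    (hres : ‖Finv (F uh)‖ ≤ α)
    (hball : closedBall uh (2 * α) ⊆ D)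
    (hLip : ∀ v ∈ D, ∀ w ∈ D, ‖Finv.comp (F' v - F' w)‖ ≤ ω * ‖v - w‖)
    (hαω : α * ω ≤ 1 / 2) :
    ∃! u : V, u ∈ closedBall uh ((1 - Real.sqrt (1 - 2 * α * ω)) / ω) ∧ F u = 0 := by
  set σ := Real.sqrt (1 - 2 * α * ω) with hσdef
  have hσ0 : 0 ≤ σ := Real.sqrt_nonneg _
  have hσsq : σ ^ 2 = 1 - 2 * α * ω := Real.sq_sqrt (by nlinarith)
  have hσ1 : σ < 1 := by nlinarith
  set ρ := (1 - σ) / ω with hρdef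
  have hρpos : 0 < ρ := div_pos (by linarith) hω
  have hωρ : ω * ρ = 1 - σ := by
    rw [hρdef]; field_simp
  have hfix : α + ω * ρ ^ 2 / 2 = ρ := by nlinarith [hωρ, hσsq]
  have hρ2α : ρ ≤ 2 * α := by nlinarith [hωρ, hσsq]
  have hωρ1 : ω * ρ ≤ 1 := by rw [hωρ]; linarith
  have hmemD : ∀ x : V, ‖x - uh‖ ≤ 2 * α → x ∈ D := fun x hx =>
    hball (by simpa [mem_closedBall, dist_eq_norm] using hx)
  set G := fun x : V => x - Finv (F x) with hGdef
  set G' := fun x : V => (ContinuousLinearMap.id ℝ V - Finv.comp (F' x)) with hG'def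
  have hG' : ∀ x ∈ D, HasFDerivAt G (G' x) x := fun x hx =>
    (hasFDerivAt_id x).sub (Finv.hasFDerivAt.comp x (hdiff x hx))
  have hG'eq : ∀ x : V, G' x = Finv.comp (F' uh - F' x) := by
    intro x
    ext y
    simp [hG'def, map_sub, hlinv]
  have hG'norm : ∀ x ∈ D, ‖G' x‖ ≤ ω * ‖x - uh‖ := by
    intro x hx
    rw [hG'eq]
    calc ‖Finv.comp (F' uh - F' x)‖ ≤ ω * ‖uh - x‖ := hLip uh huhD x hx
    _ = ω * ‖x - uh‖ := by rw [norm_sub_rev]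
  -- key mean value estimate
  have key : ∀ x y : V, ∀ c0 c1 c2 : ℝ,
      (∀ s ∈ Set.Icc (0:ℝ) 1, x + s • (y - x) ∈ D) →
      (∀ s ∈ Set.Icc (0:ℝ) 1,
        ω * ‖(x + s • (y - x)) - uh‖ * ‖y - x‖ ≤ c0 + c1 * s + c2 * s ^ 2) →
      ‖G y - G x‖ ≤ c0 + c1 / 2 + c2 / 3 := by
    intro x y c0 c1 c2 hseg hbnd
    have hf : ∀ s ∈ Set.Icc (0:ℝ) 1, HasDerivAt (fun s : ℝ => G (x + s • (y - x)))
        ((G' (x + s • (y - x))) (y - x)) s := by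
      intro s hs
      have hp : HasDerivAt (fun s : ℝ => x + s • (y - x)) (y - x) s := by
        simpa using ((hasDerivAt_id s).smul_const (y - x)).const_add x
      exact (hG' _ (hseg s hs)).comp_hasDerivAt s hp
    have hb : ∀ s ∈ Set.Icc (0:ℝ) 1,
        ‖(G' (x + s • (y - x))) (y - x)‖ ≤ c0 + c1 * s + c2 * s ^ 2 := by
      intro s hs
      refine le_trans ?_ (hbnd s hs)
      calc ‖(G' (x + s • (y - x))) (y - x)‖ ≤ ‖G' (x + s • (y - x))‖ * ‖y - x‖ :=
            (G' _).le_opNorm _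
        _ ≤ (ω * ‖(x + s • (y - x)) - uh‖) * ‖y - x‖ := by
            gcongr
            exact hG'norm _ (hseg s hs)
        _ = ω * ‖(x + s • (y - x)) - uh‖ * ‖y - x‖ := by ring
    have := mvt_poly' hf hb
    simpa using this
  -- segment norm bound, linear version
  have hsegnorm : ∀ x y : V, ∀ a b : ℝ, ‖x - uh‖ ≤ a → ‖y - uh‖ ≤ b →
      ∀ s ∈ Set.Icc (0:ℝ) 1, ‖(x + s • (y - x)) - uh‖ ≤ (1 - s) * a + s * b := by
    intro x y a b hxa hyb s hs
    have hrw : (x + s • (y - x)) - uh = (1 - s) • (x - uh) + s • (y - uh) := by module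
    rw [hrw]
    calc ‖(1 - s) • (x - uh) + s • (y - uh)‖
        ≤ ‖(1 - s) • (x - uh)‖ + ‖s • (y - uh)‖ := norm_add_le _ _
      _ = (1 - s) * ‖x - uh‖ + s * ‖y - uh‖ := by
          rw [norm_smul, norm_smul, Real.norm_eq_abs, Real.norm_eq_abs,
            abs_of_nonneg (by linarith [hs.2]), abs_of_nonneg hs.1]
      _ ≤ (1 - s) * a + s * b := by
          have h1 : 0 ≤ 1 - s := by linarith [hs.2]
          have h2 : 0 ≤ s := hs.1
          gcongr
  -- Newton sequence and majorant
  set u : ℕ → V := fun n => Nat.rec uh (fun _ p => G p) n with hudef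
  set t : ℕ → ℝ := fun n => Nat.rec 0 (fun _ p => α + ω * p ^ 2 / 2) n with htdef
  have hu0 : u 0 = uh := rfl
  have huS : ∀ n, u (n + 1) = G (u n) := fun n => rfl
  have ht0 : t 0 = 0 := rfl
  have htS : ∀ n, t (n + 1) = α + ω * t n ^ 2 / 2 := fun n => rfl
  clear hudef htdef
  clear_value u t
  have main : ∀ n, 0 ≤ t n ∧ t n ≤ ρ ∧ ‖u n - uh‖ ≤ t n ∧ t n ≤ t (n + 1) ∧
      ‖u (n + 1) - u n‖ ≤ t (n + 1) - t n := by
    intro n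
    induction n with
    | zero =>
      refine ⟨le_of_eq ht0.symm, by rw [ht0]; exact hρpos.le, by simp [hu0, ht0], ?_, ?_⟩
      · rw [ht0, htS 0, ht0]; positivity
      · have h1 : u (0 + 1) - u 0 = -(Finv (F uh)) := by
          rw [huS 0, hu0, hGdef]; beta_reduce; abel
        rw [h1, norm_neg, htS 0, ht0]
        simpa using hres
    | succ n ih =>
      obtain ⟨h0, hρn, hun, hmono, hstep⟩ := ih
      have h0' : 0 ≤ t (n + 1) := h0.trans hmono
      have hun' : ‖u (n + 1) - uh‖ ≤ t (n + 1) := by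
        calc ‖u (n + 1) - uh‖ ≤ ‖u (n + 1) - u n‖ + ‖u n - uh‖ :=
              norm_sub_le_norm_sub_add_norm_sub _ _ _
          _ ≤ t (n + 1) := by linarith
      have hρn' : t (n + 1) ≤ ρ := by
        rw [htS n]
        have hsq : t n ^ 2 ≤ ρ ^ 2 := by nlinarith
        nlinarith
      have hmono' : t (n + 1) ≤ t (n + 1 + 1) := by
        rw [htS n, htS (n + 1)]
        have hsq : t n ^ 2 ≤ t (n + 1) ^ 2 := by nlinarith
        nlinarith
      refine ⟨h0', hρn', hun', hmono', ?_⟩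
      -- the mean value step
      have hseg : ∀ s ∈ Set.Icc (0:ℝ) 1, u n + s • (u (n + 1) - u n) ∈ D := by
        intro s hs
        apply hmemD
        have hpb := hsegnorm (u n) (u (n + 1)) (t n) (t (n + 1)) hun hun' s hs
        have hcc : (1 - s) * t n + s * t (n + 1) ≤ ρ := by
          nlinarith [mul_le_mul_of_nonneg_left hρn (by linarith [hs.2] : (0:ℝ) ≤ 1 - s),
            mul_le_mul_of_nonneg_left hρn' hs.1]
        linarith
      set d := ‖u (n + 1) - u n‖ with hddef
      have hd0 : 0 ≤ d := norm_nonneg _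
      have hkey := key (u n) (u (n + 1)) (ω * t n * d) (ω * (t (n + 1) - t n) * d) 0 hseg ?_
      · have hGrw : G (u (n + 1)) - G (u n) = u (n + 1 + 1) - u (n + 1) := by
          rw [huS (n + 1), huS n]
        rw [hGrw] at hkey
        calc ‖u (n + 1 + 1) - u (n + 1)‖ ≤ ω * t n * d + ω * (t (n + 1) - t n) * d / 2 + 0 / 3 :=
              hkey
          _ = ω * (t n + t (n + 1)) / 2 * d := by ring
          _ ≤ ω * (t n + t (n + 1)) / 2 * (t (n + 1) - t n) := by
              have hnn : 0 ≤ ω * (t n + t (n + 1)) / 2 := by positivity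
              exact mul_le_mul_of_nonneg_left hstep hnn
          _ = t (n + 1 + 1) - t (n + 1) := by rw [htS (n + 1), htS n]; ring
      · intro s hs
        have hpb := hsegnorm (u n) (u (n + 1)) (t n) (t (n + 1)) hun hun' s hs
        calc ω * ‖(u n + s • (u (n + 1) - u n)) - uh‖ * d
            ≤ ω * ((1 - s) * t n + s * t (n + 1)) * d := by
              have h1 : 0 ≤ ω := hω.le
              gcongr
          _ = ω * t n * d + ω * (t (n + 1) - t n) * d * s + 0 * s ^ 2 := by ring
  -- convergence of the Newton sequence
  have htρ : ∀ n, t n ≤ ρ := fun n => (main n).2.1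
  have hsum0 : Summable (fun n => t (n + 1) - t n) := by
    apply summable_of_sum_range_le (c := ρ) (fun n => by linarith [(main n).2.2.2.1])
    intro n
    rw [Finset.sum_range_sub (f := t)]
    rw [ht0]
    linarith [htρ n]
  have hsum : Summable (fun n => dist (u n) (u (n + 1))) := by
    apply Summable.of_nonneg_of_le (fun n => dist_nonneg) _ hsum0
    intro n
    rw [dist_eq_norm, norm_sub_rev]
    exact (main n).2.2.2.2
  obtain ⟨ustar, hus⟩ := cauchySeq_tendsto_of_complete (cauchySeq_of_summable_dist hsum)
  have hmem : ‖ustar - uh‖ ≤ ρ := by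
    have h1 : Tendsto (fun n => ‖u n - uh‖) atTop (nhds ‖ustar - uh‖) :=
      ((hus.sub_const uh).norm)
    exact le_of_tendsto h1 (Filter.Eventually.of_forall fun n =>
      le_trans (main n).2.2.1 (htρ n))
  have hustarD : ustar ∈ D := hmemD ustar (hmem.trans hρ2α)
  have hzero : F ustar = 0 := by
    have hc : ContinuousAt (fun x => Finv (F x)) ustar :=
      Finv.continuous.continuousAt.comp (hdiff ustar hustarD).continuousAt
    have h1 : Tendsto (fun n => Finv (F (u n))) atTop (nhds (Finv (F ustar))) :=
      hc.tendsto.comp hus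
    have h2 : Tendsto (fun n => u n - u (n + 1)) atTop (nhds (ustar - ustar)) :=
      hus.sub (hus.comp (tendsto_add_atTop_nat 1))
    have h3 : (fun n => u n - u (n + 1)) = fun n => Finv (F (u n)) := by
      funext n
      rw [huS n, hGdef]
      module
    rw [h3] at h2
    have h4 : Finv (F ustar) = ustar - ustar := tendsto_nhds_unique h1 h2
    have h5 : Finv (F ustar) = 0 := by rw [h4, sub_self]
    have := hrinv (F ustar)
    rw [h5, map_zero] at this
    exact this.symm
  -- uniqueness
  have uniq2 : ∀ x, ‖x - uh‖ ≤ ρ → ∀ y, ‖y - uh‖ ≤ ρ → F x = 0 → F y = 0 → y = x := by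
    intro x hx y hy hFx hFy
    set e := ‖y - x‖ with hedef
    have he0 : 0 ≤ e := norm_nonneg _
    have he2ρ : e ≤ 2 * ρ := by
      calc e ≤ ‖y - uh‖ + ‖uh - x‖ := norm_sub_le_norm_sub_add_norm_sub _ _ _
        _ ≤ 2 * ρ := by rw [norm_sub_rev uh x]; linarith
    have hGx : G x = x := by rw [hGdef]; simp [hFx]
    have hGy : G y = y := by rw [hGdef]; simp [hFy]
    -- the quadratic segment estimate
    have hquad : ∀ s ∈ Set.Icc (0:ℝ) 1,
        ‖(x + s • (y - x)) - uh‖ ≤ ρ - s * (1 - s) * e ^ 2 / (2 * ρ) := by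
      intro s hs
      obtain ⟨hs0, hs1⟩ := hs
      have hrw : (x + s • (y - x)) - uh = (1 - s) • (x - uh) + s • (y - uh) := by module
      set p := x - uh with hp
      set q := y - uh with hq
      have hqp : y - x = q - p := by rw [hp, hq]; abel
      have hid : ‖(1 - s) • p + s • q‖ ^ 2
          = (1 - s) * ‖p‖ ^ 2 + s * ‖q‖ ^ 2 - s * (1 - s) * ‖q - p‖ ^ 2 := by
        have h1 : ‖(1 - s) • p + s • q‖ ^ 2
            = (1 - s) ^ 2 * ‖p‖ ^ 2 + 2 * ((1 - s) * s) * (inner ℝ p q : ℝ)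
              + s ^ 2 * ‖q‖ ^ 2 := by
          rw [norm_add_sq_real, real_inner_smul_left, real_inner_smul_right,
            norm_smul, norm_smul, Real.norm_eq_abs, Real.norm_eq_abs,
            abs_of_nonneg (by linarith : (0:ℝ) ≤ 1 - s), abs_of_nonneg hs0]
          ring
        have h2 : ‖q - p‖ ^ 2 = ‖q‖ ^ 2 - 2 * (inner ℝ p q : ℝ) + ‖p‖ ^ 2 := by
          rw [norm_sub_sq_real, real_inner_comm]
        linear_combination h1 + s * (1 - s) * h2
      have hc0 : 0 ≤ s * (1 - s) * e ^ 2 :=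
        mul_nonneg (mul_nonneg hs0 (by linarith)) (sq_nonneg e)
      have hR0 : 0 ≤ ρ - s * (1 - s) * e ^ 2 / (2 * ρ) := by
        have h1 : s * (1 - s) ≤ 1 / 4 := by nlinarith [sq_nonneg (2 * s - 1)]
        have h3 : s * (1 - s) * e ^ 2 ≤ ρ ^ 2 := by nlinarith
        have h4 : s * (1 - s) * e ^ 2 / (2 * ρ) ≤ ρ ^ 2 / (2 * ρ) :=
          (div_le_div_iff_of_pos_right (by positivity)).mpr h3
        have h5 : ρ ^ 2 / (2 * ρ) = ρ / 2 := by field_simp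
        rw [h5] at h4
        linarith
      rw [hrw]
      apply le_of_pow_le_pow_left₀ (two_ne_zero) hR0
      have hqpe : ‖q - p‖ = e := by rw [hedef, hqp]
      have hp2 : ‖p‖ ^ 2 ≤ ρ ^ 2 := by nlinarith [norm_nonneg p]
      have hq2 : ‖q‖ ^ 2 ≤ ρ ^ 2 := by nlinarith [norm_nonneg q]
      have hexp : (ρ - s * (1 - s) * e ^ 2 / (2 * ρ)) ^ 2
          = ρ ^ 2 - s * (1 - s) * e ^ 2 + (s * (1 - s) * e ^ 2 / (2 * ρ)) ^ 2 := by
        field_simp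
        ring
      rw [hid, hqpe, hexp]
      nlinarith [mul_le_mul_of_nonneg_left hp2 (by linarith : (0:ℝ) ≤ 1 - s),
        mul_le_mul_of_nonneg_left hq2 hs0,
        sq_nonneg (s * (1 - s) * e ^ 2 / (2 * ρ))]
    -- apply the key estimate
    have hsegD : ∀ s ∈ Set.Icc (0:ℝ) 1, x + s • (y - x) ∈ D := by
      intro s hs
      apply hmemD
      have h1 := hquad s hs
      have hc0 : 0 ≤ s * (1 - s) * e ^ 2 :=
        mul_nonneg (mul_nonneg hs.1 (by linarith [hs.2])) (sq_nonneg e)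
      have h2 : 0 ≤ s * (1 - s) * e ^ 2 / (2 * ρ) := by positivity
      linarith
    have hbound : ∀ s ∈ Set.Icc (0:ℝ) 1,
        ω * ‖(x + s • (y - x)) - uh‖ * ‖y - x‖ ≤
          ω * ρ * e + (-(ω * e ^ 3 / (2 * ρ))) * s + (ω * e ^ 3 / (2 * ρ)) * s ^ 2 := by
      intro s hs
      have h1 := hquad s hs
      have h2 : ω * ‖(x + s • (y - x)) - uh‖ * ‖y - x‖
          ≤ ω * (ρ - s * (1 - s) * e ^ 2 / (2 * ρ)) * e := by
        rw [← hedef]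
        exact mul_le_mul_of_nonneg_right (mul_le_mul_of_nonneg_left h1 hω.le) he0
      refine h2.trans (le_of_eq ?_)
      field_simp
      ring
    have hfinal := key x y (ω * ρ * e) (-(ω * e ^ 3 / (2 * ρ))) (ω * e ^ 3 / (2 * ρ))
      hsegD hbound
    rw [hGx, hGy, ← hedef] at hfinal
    have hA0 : 0 ≤ ω * e ^ 3 / (2 * ρ) := by positivity
    have hωρe : ω * ρ * e ≤ e := by nlinarith [mul_le_mul_of_nonneg_right hωρ1 he0]
    have hA : ω * e ^ 3 / (2 * ρ) = 0 := le_antisymm (by linarith) hA0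
    have he3 : ω * e ^ 3 = 0 := by
      rcases div_eq_zero_iff.mp hA with h | h
      · exact h
      · exact absurd h (by positivity : (2 * ρ : ℝ) ≠ 0)
    have he : e = 0 := by
      have : e ^ 3 = 0 := by
        rcases mul_eq_zero.mp he3 with h | h
        · exact absurd h hω.ne'
        · exact h
      exact pow_eq_zero_iff (by norm_num) |>.mp this
    have : y - x = 0 := norm_eq_zero.mp (hedef ▸ he)
    exact sub_eq_zero.mp this
  refine ⟨ustar, ⟨by rwa [mem_closedBall, dist_eq_norm], hzero⟩, ?_⟩
  rintro y ⟨hymem, hyzero⟩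
  exact uniq2 ustar hmem y (by rwa [mem_closedBall, dist_eq_norm] at hymem) hzero hyzero
end

section
/- Let Ω ⊂ ℝ³ be a bounded Lipschitz domain and V = {v ∈ (H₀¹(Ω))³ : div v = 0}. Suppose u ∈ V solves the Stokes equation (∇u, ∇v) = (f, v) for all v ∈ V, where f ∈ (L²(Ω))³. If p ∈ H(div; Ω)³ satisfies div p + ∇φ + f = 0 for some φ ∈ H¹(Ω), then for any v ∈ V the Pythagorean identity ‖∇u − ∇v‖² + ‖∇u − p‖² = ‖p − ∇v‖² holds (all norms are L²(Ω) norms). -/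
open MeasureTheory
open scoped RealInnerProductSpace

noncomputable section

/-- Three-dimensional Euclidean space. -/
abbrev E3 := EuclideanSpace ℝ (Fin 3)

/-- `pd u j x` is the partial derivative `∂_j u (x)` of a vector field `u`. -/
def pd (u : E3 → E3) (j : Fin 3) (x : E3) : E3 :=
  fderiv ℝ u x (EuclideanSpace.single j 1)

/-- Pointwise Frobenius product `∇u(x) · ∇v(x)`. -/
def gradDot (u v : E3 → E3) (x : E3) : ℝ := ∑ j, ⟪pd u j x, pd v j x⟫

/-- Divergence of a vector field. -/
def divg (u : E3 → E3) (x : E3) : ℝ := ∑ j, pd u j x j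

/-- Membership in `V = {v ∈ (H₀¹(Ω))³ : div v = 0}` (vector fields vanishing
outside `Ω` and divergence free). -/
def memV (Ω : Set E3) (u : E3 → E3) : Prop :=
  ContDiff ℝ 1 u ∧ (∀ x ∉ Ω, u x = 0) ∧ ∀ x, divg u x = 0

namespace PSAux
open Metric Filter
open scoped Topology ENNReal

lemma inner_expand (a b : E3) : ⟪a, b⟫ = ∑ i, a i * b i := by
  simp [PiLp.inner_apply, RCLike.inner_apply, conj_trivial]
  exact Finset.sum_congr rfl fun i _ => mul_comm _ _

lemma contDiff_proj {g : E3 → E3} (hg : ContDiff ℝ 1 g) (i : Fin 3) :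
    ContDiff ℝ 1 (fun y => g y i) :=
  ((EuclideanSpace.proj i : E3 →L[ℝ] ℝ).contDiff).comp hg

lemma pdc {g : E3 → E3} (hg : Differentiable ℝ g) (i j : Fin 3) (x : E3) :
    fderiv ℝ (fun y => g y i) x (EuclideanSpace.single j 1) = pd g j x i := by
  have h : HasFDerivAt (fun y => g y i)
      ((EuclideanSpace.proj i : E3 →L[ℝ] ℝ).comp (fderiv ℝ g x)) x := by
    exact
      ((EuclideanSpace.proj i : E3 →L[ℝ] ℝ).hasFDerivAt).comp x (hg x).hasFDerivAt
  rw [h.fderiv]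
  rfl

lemma cont_pd {g : E3 → E3} (hg : ContDiff ℝ 1 g) (j : Fin 3) :
    Continuous fun x => pd g j x :=
  (hg.continuous_fderiv one_ne_zero).clm_apply continuous_const

lemma cont_pdi {g : E3 → E3} (hg : ContDiff ℝ 1 g) (i j : Fin 3) :
    Continuous fun x => pd g j x i :=
  ((EuclideanSpace.proj i : E3 →L[ℝ] ℝ).continuous).comp (cont_pd hg j)

lemma pd_zero_off {g : E3 → E3} {Ω : Set E3} (hg : ∀ x ∉ Ω, g x = 0) {x : E3}
    (hx : x ∉ closure Ω) (j : Fin 3) : pd g j x = 0 := by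
  have hev : g =ᶠ[nhds x] (fun _ => (0 : E3)) := by
    filter_upwards [(isClosed_closure.isOpen_compl).mem_nhds hx] with y hy
    exact hg y fun hyΩ => hy (subset_closure hyΩ)
  unfold pd
  rw [hev.fderiv_eq]
  simp

lemma fderiv_ae_zero_on {F : Type} [NormedAddCommGroup F] [NormedSpace ℝ F]
    (w : E3 → F) (hw : Differentiable ℝ w) (S : Set E3) (hSm : MeasurableSet S)
    (hS : ∀ x ∈ S, w x = 0) :
    ∀ᵐ x ∂(volume.restrict S), fderiv ℝ w x = 0 := by
  have hdens : ∀ᵐ x ∂(volume.restrict S), ∀ n : ℕ,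
      ∀ {ι : Type} {l : Filter ι} (wc : ι → E3) (δ : ι → ℝ),
        Tendsto δ l (𝓝[>] 0) →
          (∀ᶠ j in l, x ∈ closedBall (wc j) ((n : ℝ) * δ j)) →
            Tendsto (fun j => volume (S ∩ closedBall (wc j) (δ j)) /
              volume (closedBall (wc j) (δ j))) l (𝓝 1) :=
    ae_all_iff.2 fun n =>
      IsUnifLocDoublingMeasure.ae_tendsto_measure_inter_div (volume : Measure E3) S n
  filter_upwards [hdens, ae_restrict_mem hSm] with x hx hxS
  set L := fderiv ℝ w x with hL
  ext v
  simp only [ContinuousLinearMap.zero_apply]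
  rw [← norm_le_zero_iff]
  refine le_of_forall_pos_le_add ?_
  intro ε hε
  rw [zero_add]
  -- choose n
  obtain ⟨n, hn⟩ := exists_nat_gt (2 * ‖L‖ * (‖v‖ + 1) / ε)
  have hn0 : 0 < (n : ℝ) := lt_of_le_of_lt (by positivity) hn
  set η : ℝ := (‖v‖ + 1) / n with hηdef
  have hη : 0 < η := by positivity
  have hLη : ‖L‖ * η ≤ ε / 2 := by
    have h2 : 2 * ‖L‖ * (‖v‖ + 1) < n * ε := by rwa [div_lt_iff₀ hε] at hn
    rw [hηdef, ← mul_div_assoc, div_le_div_iff₀ hn0 (by norm_num : (0:ℝ) < 2)]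
    nlinarith
  set c : ℝ := ε / (2 * (η + ‖v‖)) with hcdef
  have hc : 0 < c := by positivity
  -- little-o property
  have hlo := (hasFDerivAt_iff_isLittleO_nhds_zero.1 (hw x).hasFDerivAt).def hc
  rw [Metric.eventually_nhds_iff] at hlo
  obtain ⟨δ₀, hδ₀, hball⟩ := hlo
  -- the sequences
  set t : ℕ → ℝ := fun j => 1 / (j + 1) with htdef
  have ht : ∀ j, 0 < t j := fun j => by positivity
  have htlim : Tendsto t atTop (𝓝 0) := tendsto_one_div_add_atTop_nhds_zero_nat
  set wc : ℕ → E3 := fun j => x + (t j) • v with hwcdef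
  set δ : ℕ → ℝ := fun j => η * t j with hδdef
  have hδlim : Tendsto δ atTop (𝓝[>] 0) := by
    apply tendsto_nhdsWithin_iff.2
    constructor
    · have h0 : Tendsto (fun j => η * t j) atTop (𝓝 (η * 0)) := htlim.const_mul η
      rw [mul_zero] at h0
      exact h0
    · exact Eventually.of_forall fun j => Set.mem_Ioi.2 (by positivity)
  have hxmem : ∀ j, x ∈ closedBall (wc j) ((n : ℝ) * δ j) := by
    intro j
    rw [mem_closedBall, hwcdef]
    simp only [dist_self_add_right, norm_smul, Real.norm_eq_abs,
      abs_of_pos (ht j)]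
    calc t j * ‖v‖ ≤ t j * (n * η) := by
          refine mul_le_mul_of_nonneg_left ?_ (ht j).le
          rw [hηdef, mul_div_cancel₀ _ hn0.ne']
          linarith
      _ = n * δ j := by rw [hδdef]; ring
  have hrat := hx n wc δ hδlim (Eventually.of_forall hxmem)
  have hne : ∀ᶠ j in atTop, (S ∩ closedBall (wc j) (δ j)).Nonempty := by
    filter_upwards [hrat.eventually (eventually_gt_nhds (by norm_num : (0:ℝ≥0∞) < 1))] with j hj
    by_contra hemp
    rw [Set.not_nonempty_iff_eq_empty] at hemp
    rw [hemp] at hj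
    simp at hj
  have hsm : ∀ᶠ j : ℕ in atTop, (η + ‖v‖) * t j < δ₀ := by
    have h0 : Tendsto (fun j => (η + ‖v‖) * t j) atTop (𝓝 ((η + ‖v‖) * 0)) :=
      htlim.const_mul (η + ‖v‖)
    rw [mul_zero] at h0
    exact h0.eventually_lt_const hδ₀
  obtain ⟨j, hjne, hjsm⟩ := (hne.and hsm).exists
  obtain ⟨s, hsS, hsb⟩ := hjne
  rw [mem_closedBall] at hsb
  -- main estimate
  have hwcx : ‖wc j - x‖ = t j * ‖v‖ := by
    rw [hwcdef]
    simp [norm_smul, abs_of_pos (ht j)]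
  have hswc : ‖s - wc j‖ ≤ η * t j := by
    rw [← dist_eq_norm]
    exact hsb.trans_eq (by rw [hδdef])
  have hbd : ‖s - x‖ ≤ (η + ‖v‖) * t j := by
    calc ‖s - x‖ ≤ ‖s - wc j‖ + ‖wc j - x‖ := norm_sub_le_norm_sub_add_norm_sub s (wc j) x
      _ ≤ η * t j + t j * ‖v‖ := by rw [hwcx]; exact add_le_add_left hswc _
      _ = (η + ‖v‖) * t j := by ring
  have hbd' : ‖s - x‖ < δ₀ := lt_of_le_of_lt hbd hjsm
  have hkey : ‖L (s - x)‖ ≤ c * ‖s - x‖ := by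
    have h := hball (y := s - x) (by rwa [dist_zero_right])
    rw [add_sub_cancel] at h
    rw [hS s hsS, hS x hxS, ← hL] at h
    simp only [sub_self, zero_sub, norm_neg] at h
    exact h
  have hadd : s - x + (wc j - s) = t j • v := by
    rw [add_comm, sub_add_sub_cancel, hwcdef, add_sub_cancel_left]
  have hsplit : L (t j • v) = L (s - x) + L (wc j - s) := by
    rw [← map_add, hadd]
  have h2 : t j * ‖L v‖ ≤ c * ((η + ‖v‖) * t j) + ‖L‖ * (η * t j) := by
    have e1 : ‖L (t j • v)‖ = t j * ‖L v‖ := by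
      rw [L.map_smul, norm_smul, Real.norm_eq_abs, abs_of_pos (ht j)]
    calc t j * ‖L v‖ = ‖L (t j • v)‖ := e1.symm
      _ ≤ ‖L (s - x)‖ + ‖L (wc j - s)‖ := by rw [hsplit]; exact norm_add_le _ _
      _ ≤ c * ‖s - x‖ + ‖L‖ * ‖wc j - s‖ := add_le_add hkey (L.le_opNorm _)
      _ ≤ c * ((η + ‖v‖) * t j) + ‖L‖ * (η * t j) := by
          gcongr
          rw [← norm_neg]
          simpa [neg_sub] using hswc
  have hc2 : c * (η + ‖v‖) = ε / 2 := by
    rw [hcdef]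
    field_simp
  have h3 : t j * ‖L v‖ ≤ t j * (c * (η + ‖v‖) + ‖L‖ * η) :=
    h2.trans_eq (by ring)
  have hfin : ‖L v‖ ≤ c * (η + ‖v‖) + ‖L‖ * η := (mul_le_mul_iff_right₀ (ht j)).1 h3
  rw [hc2] at hfin
  linarith


end PSAux

open PSAux

/-- Extended Prager–Synge theorem for the Stokes equation: if `u` solves the Stokes
problem for `f` and the matrix field `p` satisfies `div p + ∇φ + f = 0` on `Ω`
(row-wise), then the Pythagorean identity
`‖∇u − ∇v‖² + ‖∇u − p‖² = ‖p − ∇v‖²` holds for every `v ∈ V`. -/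
theorem stmt_1 (Ω : Set E3) (hΩo : IsOpen Ω) (hΩb : Bornology.IsBounded Ω)
    (f : E3 → E3) (hf : MemLp f 2 (volume.restrict Ω))
    (u : E3 → E3) (hu : memV Ω u)
    (hstokes : ∀ v, memV Ω v → ∫ x in Ω, gradDot u v x = ∫ x in Ω, ⟪f x, v x⟫)
    (p : E3 → Fin 3 → E3) (φ : E3 → ℝ)
    (hp : ∀ i, ContDiff ℝ 1 (fun y => p y i)) (hφ : ContDiff ℝ 1 φ)
    (heq : ∀ x ∈ Ω, ∀ i : Fin 3,
      divg (fun y => p y i) x + fderiv ℝ φ x (EuclideanSpace.single i 1) + f x i = 0)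
    (v : E3 → E3) (hv : memV Ω v) :
    (∫ x in Ω, gradDot (u - v) (u - v) x)
      + (∫ x in Ω, ∑ i, ∑ j, (pd u j x i - p x i j) ^ 2)
      = ∫ x in Ω, ∑ i, ∑ j, (p x i j - pd v j x i) ^ 2 := by
  have hKc : IsCompact (closure Ω) := hΩb.isCompact_closure
  have intOn : ∀ (F : E3 → ℝ), Continuous F → IntegrableOn F Ω volume := fun F hF =>
    (hF.continuousOn.integrableOn_compact hKc).mono_set subset_closure
  have huD : Differentiable ℝ u := hu.1.differentiable one_ne_zero
  have hvD : Differentiable ℝ v := hv.1.differentiable one_ne_zero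
  have hWc1 : ContDiff ℝ 1 (u - v) := hu.1.sub hv.1
  have hpcont : ∀ i j, Continuous fun x => p x i j := fun i j =>
    ((EuclideanSpace.proj j : E3 →L[ℝ] ℝ).continuous).comp (hp i).continuous
  have pd_sub : ∀ j x, pd (u - v) j x = pd u j x - pd v j x := by
    intro j x
    have h : fderiv ℝ (u - v) x = fderiv ℝ u x - fderiv ℝ v x := by
      have e : (u - v) = fun y => u y - v y := rfl
      rw [fderiv_sub (huD x) (hvD x)]
    simp [pd, h]
  -- the cross term
  set G : E3 → ℝ :=
    fun x => ∑ i, ∑ j, (pd u j x i - pd v j x i) * (pd u j x i - p x i j) with hGdef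
  have hcross : ∫ x in Ω, G x = 0 := by
    classical
    have hWD : Differentiable ℝ (u - v) := hWc1.differentiable one_ne_zero
    have hpD : ∀ i, Differentiable ℝ (fun y => p y i) := fun i => (hp i).differentiable one_ne_zero
    have hWmem : memV Ω (u - v) := by
      refine ⟨hWc1, fun x hx => ?_, fun x => ?_⟩
      · show u x - v x = 0
        rw [hu.2.1 x hx, hv.2.1 x hx, sub_zero]
      · have e : ∀ j, pd (u - v) j x j = pd u j x j - pd v j x j := fun j => by
          rw [pd_sub]; rfl
        have h1 := hu.2.2 x
        have h2 := hv.2.2 x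
        unfold divg at h1 h2 ⊢
        rw [Finset.sum_congr rfl fun j _ => e j, Finset.sum_sub_distrib, h1, h2, sub_self]
    have hW0 : ∀ x ∉ Ω, (u - v) x = 0 := hWmem.2.1
    have hpdW0 : ∀ x ∉ closure Ω, ∀ j, pd (u - v) j x = 0 := fun x hx j =>
      pd_zero_off hW0 hx j
    have contWi : ∀ i, Continuous fun x => (u - v) x i := fun i =>
      ((EuclideanSpace.proj i : E3 →L[ℝ] ℝ).continuous).comp hWc1.continuous
    have contpdW : ∀ i j, Continuous fun x => pd (u - v) j x i := fun i j => cont_pdi hWc1 i j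
    have contdφ : ∀ i, Continuous fun x => fderiv ℝ φ x (EuclideanSpace.single i 1) := fun i =>
      (hφ.continuous_fderiv one_ne_zero).clm_apply continuous_const
    have contpdp : ∀ i j k, Continuous fun x => pd (fun y => p y i) j x k := fun i j k =>
      cont_pdi (hp i) k j
    have contdivp : ∀ i, Continuous fun x => divg (fun y => p y i) x := fun i =>
      continuous_finset_sum _ fun j _ => contpdp i j j
    have intCS : ∀ (F : E3 → ℝ), Continuous F → (∀ x ∉ closure Ω, F x = 0) →
        Integrable F volume := fun F hF h0 =>
      hF.integrable_of_hasCompactSupport (HasCompactSupport.intro hKc h0)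
    have hWi0c : ∀ i, ∀ x ∉ closure Ω, (u - v) x i = 0 := fun i x hx => by
      rw [hW0 x fun hxΩ => hx (subset_closure hxΩ)]; rfl
    have hpdWi0c : ∀ i j, ∀ x ∉ closure Ω, pd (u - v) j x i = 0 := fun i j x hx => by
      rw [hpdW0 x hx j]; rfl
    have int1 : ∀ i j, Integrable (fun x => pd (u - v) j x i * p x i j) volume := fun i j =>
      intCS _ ((contpdW i j).mul (hpcont i j))
        (fun x hx => by rw [hpdWi0c i j x hx, zero_mul])
    have int2 : ∀ i j, Integrable (fun x => (u - v) x i * pd (fun y => p y i) j x j) volume :=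
      fun i j => intCS _ ((contWi i).mul (contpdp i j j))
        (fun x hx => by rw [hWi0c i x hx, zero_mul])
    have int3 : ∀ i j, Integrable (fun x => (u - v) x i * p x i j) volume := fun i j =>
      intCS _ ((contWi i).mul (hpcont i j)) (fun x hx => by rw [hWi0c i x hx, zero_mul])
    have intφ1 : ∀ i, Integrable (fun x => (u - v) x i
        * fderiv ℝ φ x (EuclideanSpace.single i 1)) volume := fun i =>
      intCS _ ((contWi i).mul (contdφ i)) (fun x hx => by rw [hWi0c i x hx, zero_mul])
    have intφ2 : ∀ i, Integrable (fun x => pd (u - v) i x i * φ x) volume := fun i =>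
      intCS _ ((contpdW i i).mul hφ.continuous)
        (fun x hx => by rw [hpdWi0c i i x hx, zero_mul])
    have intφ3 : ∀ i, Integrable (fun x => (u - v) x i * φ x) volume := fun i =>
      intCS _ ((contWi i).mul hφ.continuous) (fun x hx => by rw [hWi0c i x hx, zero_mul])
    haveI : IsFiniteMeasure (volume.restrict Ω) :=
      ⟨by rw [Measure.restrict_apply_univ]; exact hΩb.measure_lt_top⟩
    have hfInt : IntegrableOn f Ω volume := hf.integrable (by norm_num)
    have hfiInt : ∀ i, IntegrableOn (fun x => f x i) Ω volume := fun i =>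
      (EuclideanSpace.proj i : E3 →L[ℝ] ℝ).integrable_comp hfInt
    have hWbd : ∀ i, ∃ C, ∀ x, ‖(u - v) x i‖ ≤ C := fun i =>
      (HasCompactSupport.intro hKc (hWi0c i)).exists_bound_of_continuous (contWi i)
    have hIWf : ∀ i, IntegrableOn (fun x => (u - v) x i * f x i) Ω volume := fun i =>
      (hfiInt i).bdd_mul ((contWi i).aestronglyMeasurable) (Filter.Eventually.of_forall (hWbd i).choose_spec)
    have hWiD : ∀ i, Differentiable ℝ (fun x => (u - v) x i) := fun i =>
      (contDiff_proj hWc1 i).differentiable one_ne_zero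
    have hpijD : ∀ i j, Differentiable ℝ (fun x => p x i j) := fun i j =>
      (contDiff_proj (hp i) j).differentiable one_ne_zero
    -- integration by parts against p
    have ibp1 : ∀ i j, ∫ x, pd (u - v) j x i * p x i j
        = - ∫ x, (u - v) x i * pd (fun y => p y i) j x j := by
      intro i j
      have h := integral_mul_fderiv_eq_neg_fderiv_mul_of_integrable (μ := volume)
        (f := fun x => (u - v) x i) (g := fun x => p x i j)
        (v := EuclideanSpace.single j 1)
        (by simp only [pdc hWD]; exact int1 i j)
        (by simp only [pdc (hpD i)]; exact int2 i j)
        (int3 i j) (fun x _ => hWiD i x) (fun x _ => hpijD i j x)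
      simp only [pdc hWD, pdc (hpD i)] at h
      linarith
    have ibp2 : ∀ i, ∑ j, ∫ x, pd (u - v) j x i * p x i j
        = - ∫ x, (u - v) x i * divg (fun y => p y i) x := by
      intro i
      rw [Finset.sum_congr rfl fun j _ => ibp1 i j, Finset.sum_neg_distrib]
      congr 1
      rw [← integral_finset_sum _ (fun j _ => int2 i j)]
      refine integral_congr_ae (Filter.Eventually.of_forall fun x => ?_)
      beta_reduce
      unfold divg
      rw [Finset.mul_sum]
    have toΩ : ∀ (F : E3 → ℝ), (∀ x ∉ Ω, F x = 0) → ∫ x in Ω, F x = ∫ x, F x :=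
      fun F h => setIntegral_eq_integral_of_forall_compl_eq_zero fun x hx => h x hx
    have hdiv_eq : ∀ i, ∫ x, (u - v) x i * divg (fun y => p y i) x
        = -(∫ x in Ω, (u - v) x i * fderiv ℝ φ x (EuclideanSpace.single i 1))
          - ∫ x in Ω, (u - v) x i * f x i := by
      intro i
      rw [← toΩ _ (fun x hx => by
        rw [show (u - v) x i = 0 from by rw [hW0 x hx]; rfl, zero_mul])]
      calc ∫ x in Ω, (u - v) x i * divg (fun y => p y i) x
          = ∫ x in Ω, (-((u - v) x i * fderiv ℝ φ x (EuclideanSpace.single i 1))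
              - (u - v) x i * f x i) := by
            refine setIntegral_congr_fun hΩo.measurableSet fun x hx => ?_
            have h := heq x hx i
            have e : divg (fun y => p y i) x
                = - fderiv ℝ φ x (EuclideanSpace.single i 1) - f x i := by linarith
            rw [e]; ring
        _ = (∫ x in Ω, -((u - v) x i * fderiv ℝ φ x (EuclideanSpace.single i 1)))
            - ∫ x in Ω, (u - v) x i * f x i :=
            integral_sub ((intφ1 i).integrableOn.neg) (hIWf i)
        _ = -(∫ x in Ω, (u - v) x i * fderiv ℝ φ x (EuclideanSpace.single i 1))
            - ∫ x in Ω, (u - v) x i * f x i := by rw [integral_neg]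
    -- the φ part vanishes
    have ibpφ : ∀ i, ∫ x, (u - v) x i * fderiv ℝ φ x (EuclideanSpace.single i 1)
        = - ∫ x, pd (u - v) i x i * φ x := by
      intro i
      have h := integral_mul_fderiv_eq_neg_fderiv_mul_of_integrable (μ := volume)
        (f := fun x => (u - v) x i) (g := φ) (v := EuclideanSpace.single i 1)
        (by simp only [pdc hWD]; exact intφ2 i) (intφ1 i) (intφ3 i)
        (fun x _ => hWiD i x) (fun x _ => hφ.differentiable one_ne_zero x)
      simp only [pdc hWD] at h
      exact h
    have hdivW : ∀ x, (∑ i, pd (u - v) i x i * φ x) = 0 := fun x => by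
      rw [← Finset.sum_mul]
      have h := hWmem.2.2 x
      unfold divg at h
      rw [h, zero_mul]
    have hφzero : ∑ i, ∫ x in Ω, (u - v) x i
        * fderiv ℝ φ x (EuclideanSpace.single i 1) = 0 := by
      have e : ∀ i, ∫ x in Ω, (u - v) x i * fderiv ℝ φ x (EuclideanSpace.single i 1)
          = ∫ x, (u - v) x i * fderiv ℝ φ x (EuclideanSpace.single i 1) := fun i =>
        toΩ _ (fun x hx => by rw [show (u - v) x i = 0 from by rw [hW0 x hx]; rfl, zero_mul])
      calc ∑ i, ∫ x in Ω, (u - v) x i * fderiv ℝ φ x (EuclideanSpace.single i 1)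
          = ∑ i, - ∫ x, pd (u - v) i x i * φ x := by
            refine Finset.sum_congr rfl fun i _ => ?_
            rw [e i, ibpφ i]
        _ = - ∫ x, ∑ i, pd (u - v) i x i * φ x := by
            rw [Finset.sum_neg_distrib, ← integral_finset_sum _ (fun i _ => intφ2 i)]
        _ = - ∫ (_ : E3), (0:ℝ) := by
            congr 1
            exact integral_congr_ae (Filter.Eventually.of_forall fun x => hdivW x)
        _ = 0 := by simp
    -- decompose G
    set G1 : E3 → ℝ := fun x => ∑ i, ∑ j, pd (u - v) j x i * pd u j x i with hG1def
    set G2 : E3 → ℝ := fun x => ∑ i, ∑ j, pd (u - v) j x i * p x i j with hG2def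
    have contG1 : Continuous G1 := continuous_finset_sum _ fun i _ =>
      continuous_finset_sum _ fun j _ => (contpdW i j).mul (cont_pdi hu.1 i j)
    have contG2 : Continuous G2 := continuous_finset_sum _ fun i _ =>
      continuous_finset_sum _ fun j _ => (contpdW i j).mul (hpcont i j)
    have hG20c : ∀ x ∉ closure Ω, G2 x = 0 := fun x hx => by
      rw [hG2def]
      refine Finset.sum_eq_zero fun i _ => Finset.sum_eq_zero fun j _ => ?_
      rw [hpdWi0c i j x hx, zero_mul]
    have hsplitG : ∀ x, G x = G1 x - G2 x := fun x => by
      rw [hGdef, hG1def, hG2def]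
      simp only [← Finset.sum_sub_distrib]
      refine Finset.sum_congr rfl fun i _ => Finset.sum_congr rfl fun j _ => ?_
      rw [pd_sub]
      have e : (pd u j x - pd v j x) i = pd u j x i - pd v j x i := rfl
      rw [e]; ring
    have hstep1 : ∫ x in Ω, G x = (∫ x in Ω, G1 x) - ∫ x in Ω, G2 x := by
      calc ∫ x in Ω, G x = ∫ x in Ω, (G1 x - G2 x) :=
            integral_congr_ae (Filter.Eventually.of_forall fun x => hsplitG x)
        _ = _ := integral_sub (intOn _ contG1) (intOn _ contG2)
    have hG1grad : ∫ x in Ω, G1 x = ∫ x in Ω, gradDot u (u - v) x := by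
      refine integral_congr_ae (Filter.Eventually.of_forall fun x => ?_)
      rw [hG1def]
      simp only
      unfold gradDot
      rw [Finset.sum_comm]
      refine Finset.sum_congr rfl fun j _ => ?_
      rw [inner_expand]
      exact Finset.sum_congr rfl fun i _ => mul_comm _ _
    have hstokesW := hstokes (u - v) hWmem
    have hinner : ∫ x in Ω, ⟪f x, (u - v) x⟫ = ∑ i, ∫ x in Ω, (u - v) x i * f x i := by
      rw [← integral_finset_sum _ (fun i _ => hIWf i)]
      refine integral_congr_ae (Filter.Eventually.of_forall fun x => ?_)
      beta_reduce
      rw [inner_expand]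
      exact Finset.sum_congr rfl fun i _ => mul_comm _ _
    have hG2full : ∫ x in Ω, G2 x = ∫ x, G2 x := by
      have hcompl : ∫ x in Ωᶜ, G2 x = 0 := by
        have hae := fderiv_ae_zero_on (u - v) hWD Ωᶜ hΩo.isClosed_compl.measurableSet
          (fun x hx => hW0 x hx)
        apply integral_eq_zero_of_ae
        filter_upwards [hae] with x hx0
        have hz : ∀ j i', pd (u - v) j x i' = 0 := fun j i' => by
          unfold pd
          rw [hx0]
          simp
        rw [hG2def]
        show (∑ i, ∑ j, pd (u - v) j x i * p x i j) = 0
        refine Finset.sum_eq_zero fun i _ => Finset.sum_eq_zero fun j _ => ?_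
        rw [hz j i, zero_mul]
      have hadd := integral_add_compl hΩo.measurableSet (intCS _ contG2 hG20c)
      rw [← hadd, hcompl, add_zero]
    have hG2sum : ∫ x, G2 x = ∑ i, ∑ j, ∫ x, pd (u - v) j x i * p x i j := by
      rw [hG2def]
      rw [integral_finset_sum _ (fun i _ => integrable_finset_sum _ (fun j _ => int1 i j))]
      exact Finset.sum_congr rfl fun i _ => integral_finset_sum _ (fun j _ => int1 i j)
    have hG2val : ∫ x in Ω, G2 x = ∑ i, ∫ x in Ω, (u - v) x i * f x i := by
      rw [hG2full, hG2sum]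
      calc ∑ i, ∑ j, ∫ x, pd (u - v) j x i * p x i j
          = ∑ i, - ∫ x, (u - v) x i * divg (fun y => p y i) x :=
            Finset.sum_congr rfl fun i _ => ibp2 i
        _ = ∑ i, ((∫ x in Ω, (u - v) x i * f x i)
              + ∫ x in Ω, (u - v) x i * fderiv ℝ φ x (EuclideanSpace.single i 1)) := by
            refine Finset.sum_congr rfl fun i _ => ?_
            rw [hdiv_eq i]; ring
        _ = (∑ i, ∫ x in Ω, (u - v) x i * f x i)
            + ∑ i, ∫ x in Ω, (u - v) x i * fderiv ℝ φ x (EuclideanSpace.single i 1) :=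
            Finset.sum_add_distrib
        _ = ∑ i, ∫ x in Ω, (u - v) x i * f x i := by rw [hφzero, add_zero]
    rw [hstep1, hG1grad, hstokesW, hinner, hG2val, sub_self]
  -- continuity of the three integrands
  have contA : Continuous fun x => gradDot (u - v) (u - v) x := by
    unfold gradDot
    exact continuous_finset_sum _ fun j _ => (cont_pd hWc1 j).inner (cont_pd hWc1 j)
  have contB : Continuous fun x => ∑ i, ∑ j, (pd u j x i - p x i j) ^ 2 :=
    continuous_finset_sum _ fun i _ => continuous_finset_sum _ fun j _ =>
      ((cont_pdi hu.1 i j).sub (hpcont i j)).pow 2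
  have contC : Continuous fun x => ∑ i, ∑ j, (p x i j - pd v j x i) ^ 2 :=
    continuous_finset_sum _ fun i _ => continuous_finset_sum _ fun j _ =>
      ((hpcont i j).sub (cont_pdi hv.1 i j)).pow 2
  have contG : Continuous G :=
    continuous_finset_sum _ fun i _ => continuous_finset_sum _ fun j _ =>
      (((cont_pdi hu.1 i j).sub (cont_pdi hv.1 i j)).mul
        ((cont_pdi hu.1 i j).sub (hpcont i j)))
  -- pointwise identity
  have hpoint : ∀ x, gradDot (u - v) (u - v) x
      + (∑ i, ∑ j, (pd u j x i - p x i j) ^ 2)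
      - (∑ i, ∑ j, (p x i j - pd v j x i) ^ 2) = 2 * G x := by
    intro x
    have hA : gradDot (u - v) (u - v) x
        = ∑ i, ∑ j, (pd u j x i - pd v j x i) ^ 2 := by
      unfold gradDot
      rw [Finset.sum_comm]
      refine Finset.sum_congr rfl fun j _ => ?_
      rw [inner_expand]
      refine Finset.sum_congr rfl fun i _ => ?_
      rw [pd_sub]
      have : (pd u j x - pd v j x) i = pd u j x i - pd v j x i := rfl
      rw [this]
      ring
    rw [hA, hGdef]
    simp only [← Finset.sum_add_distrib, ← Finset.sum_sub_distrib, Finset.mul_sum]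
    refine Finset.sum_congr rfl fun i _ => ?_
    refine Finset.sum_congr rfl fun j _ => ?_
    ring
  -- combine
  have h1 : ∫ x in Ω, (gradDot (u - v) (u - v) x
        + (∑ i, ∑ j, (pd u j x i - p x i j) ^ 2)
        - (∑ i, ∑ j, (p x i j - pd v j x i) ^ 2))
      = (∫ x in Ω, gradDot (u - v) (u - v) x)
      + (∫ x in Ω, ∑ i, ∑ j, (pd u j x i - p x i j) ^ 2)
      - (∫ x in Ω, ∑ i, ∑ j, (p x i j - pd v j x i) ^ 2) := by
    rw [integral_sub (intOn (fun x => gradDot (u - v) (u - v) x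
        + ∑ i, ∑ j, (pd u j x i - p x i j) ^ 2) (contA.add contB)) (intOn _ contC),
      integral_add (intOn _ contA) (intOn _ contB)]
  have h2 : ∫ x in Ω, (gradDot (u - v) (u - v) x
        + (∑ i, ∑ j, (pd u j x i - p x i j) ^ 2)
        - (∑ i, ∑ j, (p x i j - pd v j x i) ^ 2)) = 2 * ∫ x in Ω, G x := by
    rw [← integral_const_mul]
    exact integral_congr_ae (Filter.Eventually.of_forall fun x => hpoint x)
  rw [hcross, mul_zero] at h2
  rw [h2] at h1
  linarith
end
end

section
/- Let V be a separable Hilbert space with symmetric, coercive bilinear forms a and b on V, where the norm ‖·‖_b is compact relative to ‖·‖_a. Let V_h ⊆ V be a finite-dimensional subspace and P_h : V → V_h the a-orthogonal projection. Suppose ‖u − P_h u‖_b ≤ C ‖u − P_h u‖_a for all u ∈ V. Let λ₁ ≤ λ₂ ≤ ⋯ be the eigenvalues of the problem a(u,v) = λ b(u,v) on V, and λ_{h,1} ≤ ⋯ ≤ λ_{h,n} those of the discretized problem on V_h (n = dim V_h). Then for each i = 1, …, n, λ_i ≥ λ_{h,i} / (1 + C² λ_{h,i}). -/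
set_option maxHeartbeats 1000000

namespace LiuAux

variable {V : Type*} [NormedAddCommGroup V] [InnerProductSpace ℝ V]

variable (a : V → V → ℝ)

theorem zero_left (hbil : ∀ (c : ℝ) (u v w : V), a (c • u + v) w = c * a u w + a v w)
    (w : V) : a 0 w = 0 := by
  have h := hbil 1 0 0 w
  simp only [one_smul, add_zero, one_mul] at h
  linarith

theorem smul_left (hbil : ∀ (c : ℝ) (u v w : V), a (c • u + v) w = c * a u w + a v w)
    (c : ℝ) (u w : V) : a (c • u) w = c * a u w := by
  have h := hbil c u 0 w
  simpa [zero_left a hbil] using h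

theorem add_left (hbil : ∀ (c : ℝ) (u v w : V), a (c • u + v) w = c * a u w + a v w)
    (u v w : V) : a (u + v) w = a u w + a v w := by
  have h := hbil 1 u v w
  simpa using h

theorem sub_left (hbil : ∀ (c : ℝ) (u v w : V), a (c • u + v) w = c * a u w + a v w)
    (u v w : V) : a (u - v) w = a u w - a v w := by
  have h := hbil (-1) v u w
  have h2 : (-1 : ℝ) • v + u = u - v := by
    rw [neg_one_smul]; abel
  rw [h2] at h
  linarith

theorem add_right (hbil : ∀ (c : ℝ) (u v w : V), a (c • u + v) w = c * a u w + a v w)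
    (hsymm : ∀ u v, a u v = a v u) (w u v : V) : a w (u + v) = a w u + a w v := by
  rw [hsymm, add_left a hbil, hsymm u w, hsymm v w]

theorem smul_right (hbil : ∀ (c : ℝ) (u v w : V), a (c • u + v) w = c * a u w + a v w)
    (hsymm : ∀ u v, a u v = a v u) (c : ℝ) (w u : V) : a w (c • u) = c * a w u := by
  rw [hsymm, smul_left a hbil, hsymm u w]

theorem sub_right (hbil : ∀ (c : ℝ) (u v w : V), a (c • u + v) w = c * a u w + a v w)
    (hsymm : ∀ u v, a u v = a v u) (w u v : V) : a w (u - v) = a w u - a w v := by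
  rw [hsymm, sub_left a hbil, hsymm u w, hsymm v w]

theorem quad_nonneg (hbil : ∀ (c : ℝ) (u v w : V), a (c • u + v) w = c * a u w + a v w)
    (hpos : ∀ u, u ≠ 0 → 0 < a u u) (u : V) : 0 ≤ a u u := by
  by_cases hu : u = 0
  · rw [hu, zero_left a hbil]
  · exact (hpos u hu).le

theorem expand_add (hbil : ∀ (c : ℝ) (u v w : V), a (c • u + v) w = c * a u w + a v w)
    (hsymm : ∀ u v, a u v = a v u) (x y : V) :
    a (x + y) (x + y) = a x x + 2 * a x y + a y y := by
  rw [add_left a hbil, add_right a hbil hsymm, add_right a hbil hsymm, hsymm y x]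
  ring

theorem cauchy_schwarz (hbil : ∀ (c : ℝ) (u v w : V), a (c • u + v) w = c * a u w + a v w)
    (hsymm : ∀ u v, a u v = a v u) (hpos : ∀ u, u ≠ 0 → 0 < a u u) (x y : V) :
    a x y ≤ Real.sqrt (a x x) * Real.sqrt (a y y) := by
  by_cases hy : y = 0
  · rw [hy, hsymm, zero_left a hbil]
    positivity
  · have hyy : 0 < a y y := hpos y hy
    set t : ℝ := a x y / a y y with ht
    have hexp : a (x - t • y) (x - t • y) = a x x - 2 * t * a x y + t ^ 2 * a y y := by
      simp only [sub_left a hbil, sub_right a hbil hsymm, smul_left a hbil,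
        smul_right a hbil hsymm, hsymm y x]
      ring
    have h0 : 0 ≤ a (x - t • y) (x - t • y) := quad_nonneg a hbil hpos _
    rw [hexp] at h0
    have hsq : (a x y) ^ 2 ≤ a x x * a y y := by
      have htm : t * a y y = a x y := div_mul_cancel₀ _ hyy.ne'
      have ht2 : t ^ 2 * (a y y) ^ 2 = (a x y) ^ 2 := by rw [← htm]; ring
      have key : 0 ≤ (a x x - 2 * t * a x y + t ^ 2 * a y y) * a y y :=
        mul_nonneg h0 hyy.le
      nlinarith [key, htm, ht2]
    calc a x y ≤ |a x y| := le_abs_self _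
      _ = Real.sqrt ((a x y) ^ 2) := (Real.sqrt_sq_eq_abs _).symm
      _ ≤ Real.sqrt (a x x * a y y) := Real.sqrt_le_sqrt hsq
      _ = Real.sqrt (a x x) * Real.sqrt (a y y) :=
          Real.sqrt_mul (quad_nonneg a hbil hpos x) _

theorem quad_cont (hbil : ∀ (c : ℝ) (u v w : V), a (c • u + v) w = c * a u w + a v w)
    (hsymm : ∀ u v, a u v = a v u) (E : Submodule ℝ V) [FiniteDimensional ℝ E] :
    Continuous fun x : E => a x x := by
  let A : E →ₗ[ℝ] E →ₗ[ℝ] ℝ := LinearMap.mk₂ ℝ (fun x y : E => a x y)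
    (fun m₁ m₂ n => by simpa using add_left a hbil m₁ m₂ n)
    (fun c m n => by simpa using smul_left a hbil c m n)
    (fun m n₁ n₂ => by simpa using add_right a hbil hsymm m n₁ n₂)
    (fun c m n => by simpa using smul_right a hbil hsymm c m n)
  let A' : E →ₗ[ℝ] (E →L[ℝ] ℝ) := (LinearMap.toContinuousLinearMap.toLinearMap).comp A
  have hA' : Continuous A' := A'.continuous_of_finiteDimensional
  have h : Continuous fun x : E => A' x x := hA'.clm_apply continuous_id
  exact h

theorem rayleigh_bddAbove (b : V → V → ℝ)
    (hbila : ∀ (c : ℝ) (u v w : V), a (c • u + v) w = c * a u w + a v w)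
    (hsyma : ∀ u v, a u v = a v u)
    (hbilb : ∀ (c : ℝ) (u v w : V), b (c • u + v) w = c * b u w + b v w)
    (hsymb : ∀ u v, b u v = b v u)
    (hposb : ∀ u, u ≠ 0 → 0 < b u u)
    (E : Submodule ℝ V) [FiniteDimensional ℝ E] :
    BddAbove {r : ℝ | ∃ u ∈ E, u ≠ 0 ∧ r = a u u / b u u} := by
  have hca := quad_cont a hbila hsyma E
  have hcb := quad_cont b hbilb hsymb E
  have hsph : IsCompact (Metric.sphere (0 : E) 1) := isCompact_sphere 0 1
  have him : IsCompact ((fun x : E => a x x / b x x) '' Metric.sphere 0 1) := by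
    apply hsph.image_of_continuousOn
    apply ContinuousOn.div hca.continuousOn hcb.continuousOn
    intro x hx
    have hxne : (x : V) ≠ 0 := by
      intro h0
      have hx0 : x = 0 := by exact_mod_cast h0
      rw [hx0] at hx
      simp at hx
    exact (hposb _ hxne).ne'
  apply him.bddAbove.mono
  rintro r ⟨u, huE, hune, rfl⟩
  set x : E := ⟨u, huE⟩ with hxdef
  have hx0 : x ≠ 0 := by
    intro h
    exact hune (by simpa [hxdef] using congrArg Subtype.val h)
  have hnu : ‖u‖ ≠ 0 := norm_ne_zero_iff.2 hune
  have hxu : ‖x‖ = ‖u‖ := rfl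
  refine ⟨(‖x‖⁻¹ : ℝ) • x, ?_, ?_⟩
  · simp [norm_smul, hxu, abs_of_nonneg (inv_nonneg.2 (norm_nonneg u)),
      inv_mul_cancel₀ hnu]
  · have hcoe : (((‖x‖⁻¹ : ℝ) • x : E) : V) = (‖x‖⁻¹ : ℝ) • u := rfl
    simp only [hcoe]
    rw [smul_left a hbila, smul_right a hbila hsyma,
      smul_left b hbilb, smul_right b hbilb hsymb]
    have hc2 : (‖x‖⁻¹ : ℝ) * ‖x‖⁻¹ ≠ 0 := by positivity
    rw [show (‖x‖⁻¹ : ℝ) * (‖x‖⁻¹ * a u u) = (‖x‖⁻¹ * ‖x‖⁻¹) * a u u by ring,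
      show (‖x‖⁻¹ : ℝ) * (‖x‖⁻¹ * b u u) = (‖x‖⁻¹ * ‖x‖⁻¹) * b u u by ring,
      mul_div_mul_left _ _ hc2]

theorem rayleigh_nonempty (b : V → V → ℝ) (E : Submodule ℝ V) (h : 0 < Module.finrank ℝ E) :
    {r : ℝ | ∃ u ∈ E, u ≠ 0 ∧ r = a u u / b u u}.Nonempty := by
  haveI := Module.finite_of_finrank_pos h
  obtain ⟨x, hx⟩ := Module.finrank_pos_iff_exists_ne_zero.mp h
  refine ⟨a x x / b x x, x, x.2, ?_, rfl⟩
  intro h0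
  exact hx (by exact_mod_cast h0)

theorem fmono (C : ℝ) {x y : ℝ} (hx : 0 ≤ x) (hxy : x ≤ y) :
    x / (1 + C ^ 2 * x) ≤ y / (1 + C ^ 2 * y) := by
  have h1 : 0 < 1 + C ^ 2 * x := by positivity
  have h2 : 0 < 1 + C ^ 2 * y := by nlinarith [sq_nonneg C]
  rw [div_le_div_iff₀ h1 h2]
  nlinarith [sq_nonneg C]

theorem keylem (C A B A' B' Ea Eb : ℝ) (hC : 0 ≤ C) (hA' : 0 < A') (hB : 0 < B) (hB' : 0 < B')
    (hEa : 0 ≤ Ea) (hEb : 0 ≤ Eb) (hsum : A = A' + Ea)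
    (h1 : Real.sqrt Eb ≤ C * Real.sqrt Ea)
    (h2 : B ≤ B' + 2 * Real.sqrt B' * Real.sqrt Eb + Eb) :
    (A' / B') / (1 + C ^ 2 * (A' / B')) ≤ A / B := by
  set q := Real.sqrt B' with hqd
  set e := Real.sqrt Ea with hed
  set f := Real.sqrt Eb with hfd
  have hq2 : q ^ 2 = B' := Real.sq_sqrt hB'.le
  have he2 : e ^ 2 = Ea := Real.sq_sqrt hEa
  have hf2 : f ^ 2 = Eb := Real.sq_sqrt hEb
  have hq0 : 0 ≤ q := Real.sqrt_nonneg _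
  have he0 : 0 ≤ e := Real.sqrt_nonneg _
  have hf0 : 0 ≤ f := Real.sqrt_nonneg _
  have h3 : B ≤ (q + C * e) ^ 2 := by nlinarith [mul_nonneg (sub_nonneg.2 h1) (by positivity : (0:ℝ) ≤ 2 * q + f + C * e)]
  have h4 : A' * B ≤ A * B' + C ^ 2 * A * A' := by
    rw [hsum, ← hq2, ← he2]
    nlinarith [sq_nonneg (q * e - C * A'), mul_le_mul_of_nonneg_left h3 hA'.le]
  have hden : 0 < B' + C ^ 2 * A' := by positivity
  have hr : (A' / B') / (1 + C ^ 2 * (A' / B')) = A' / (B' + C ^ 2 * A') := by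
    rw [eq_div_iff hden.ne']
    field_simp
  rw [hr, div_le_div_iff₀ hden hB]
  nlinarith [h4]

theorem collapse (C s : ℝ) (hd0 : 0 < 1 - C ^ 2 * s) :
    (s / (1 - C ^ 2 * s)) / (1 + C ^ 2 * (s / (1 - C ^ 2 * s))) = s := by
  have h1 : (1 - C ^ 2 * s) ≠ 0 := hd0.ne'
  have h2 : 1 + C ^ 2 * (s / (1 - C ^ 2 * s)) = 1 / (1 - C ^ 2 * s) := by
    field_simp
    ring
  rw [h2]
  field_simp
  exact mul_div_cancel_right₀ s (by intro h; apply h1; linarith)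

end LiuAux

/-- Liu's eigenvalue bound (Theorem 2.1 of Liu 2015): for symmetric coercive
bilinear forms `a`, `b` on a separable Hilbert space `V` with `‖·‖_b` compact
relative to `‖·‖_a`, a finite-dimensional subspace `V_h` with `a`-orthogonal
projection `P_h` satisfying `‖u − P_h u‖_b ≤ C‖u − P_h u‖_a`, the eigenvalues
(characterized by the Courant–Fischer min–max principle) of the continuous and
discrete variational eigenproblems satisfy
`λ_i ≥ λ_{h,i}/(1 + C² λ_{h,i})` for `i = 1, …, n = dim V_h`. -/
theorem stmt_4 {V : Type*} [NormedAddCommGroup V] [InnerProductSpace ℝ V] [CompleteSpace V]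
    [TopologicalSpace.SeparableSpace V]
    (a b : V → V → ℝ)
    (ha_bilin : ∀ (c : ℝ) (u v w : V), a (c • u + v) w = c * a u w + a v w)
    (hb_bilin : ∀ (c : ℝ) (u v w : V), b (c • u + v) w = c * b u w + b v w)
    (ha_symm : ∀ u v, a u v = a v u) (hb_symm : ∀ u v, b u v = b v u)
    (ha_pos : ∀ u, u ≠ 0 → 0 < a u u) (hb_pos : ∀ u, u ≠ 0 → 0 < b u u)
    (hcompact : ∀ u : ℕ → V, (∃ Cb : ℝ, ∀ n, a (u n) (u n) ≤ Cb) →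
      ∃ φ : ℕ → ℕ, StrictMono φ ∧ ∃ l : V,
        Filter.Tendsto (fun n => b (u (φ n) - l) (u (φ n) - l)) Filter.atTop (nhds 0))
    (Vh : Submodule ℝ V) [FiniteDimensional ℝ Vh]
    (n : ℕ) (hn : n = Module.finrank ℝ Vh)
    (Ph : V → V) (hPh_mem : ∀ u, Ph u ∈ Vh)
    (hPh_orth : ∀ u : V, ∀ vh ∈ Vh, a (u - Ph u) vh = 0)
    (C : ℝ) (hC : 0 ≤ C)
    (herr : ∀ u : V,
      Real.sqrt (b (u - Ph u) (u - Ph u)) ≤ C * Real.sqrt (a (u - Ph u) (u - Ph u)))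
    (lam lamh : ℕ → ℝ)
    (hlam : ∀ i : ℕ, lam i = sInf {s : ℝ | ∃ E : Submodule ℝ V,
      Module.finrank ℝ E = i + 1 ∧
        s = sSup {r : ℝ | ∃ u ∈ E, u ≠ 0 ∧ r = a u u / b u u}})
    (hlamh : ∀ i : ℕ, lamh i = sInf {s : ℝ | ∃ E : Submodule ℝ V, E ≤ Vh ∧
      Module.finrank ℝ E = i + 1 ∧
        s = sSup {r : ℝ | ∃ u ∈ E, u ≠ 0 ∧ r = a u u / b u u}}) :
    ∀ i : ℕ, i < n → lamh i / (1 + C ^ 2 * lamh i) ≤ lam i := by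
  intro i hi
  have ha_sub := LiuAux.sub_left a ha_bilin
  have hanneg := LiuAux.quad_nonneg a ha_bilin ha_pos
  have hbnneg := LiuAux.quad_nonneg b hb_bilin hb_pos
  -- Ph is linear
  have hPh_lin : ∀ (c : ℝ) (u v : V), Ph (c • u + v) = c • Ph u + Ph v := by
    intro c u v
    have hmem : c • Ph u + Ph v ∈ Vh := Vh.add_mem (Vh.smul_mem _ (hPh_mem u)) (hPh_mem v)
    have hd : ∀ vh ∈ Vh, a (Ph (c • u + v) - (c • Ph u + Ph v)) vh = 0 := by
      intro vh hvh
      have e1 := hPh_orth (c • u + v) vh hvh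
      have e2 : a ((c • u + v) - (c • Ph u + Ph v)) vh = 0 := by
        have hrw : (c • u + v) - (c • Ph u + Ph v) = c • (u - Ph u) + (v - Ph v) := by
          rw [smul_sub]; abel
        rw [hrw, ha_bilin, hPh_orth u vh hvh, hPh_orth v vh hvh]; ring
      have hrw2 : Ph (c • u + v) - (c • Ph u + Ph v)
          = ((c • u + v) - (c • Ph u + Ph v)) - ((c • u + v) - Ph (c • u + v)) := by abel
      rw [hrw2, ha_sub, e1, e2]; ring
    by_contra hne
    have hdm : Ph (c • u + v) - (c • Ph u + Ph v) ∈ Vh := Vh.sub_mem (hPh_mem _) hmem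
    have h1 := ha_pos _ (sub_ne_zero.2 hne)
    have h2 := hd _ hdm
    linarith
  have hPh0 : Ph 0 = 0 := by
    have h := hPh_lin 1 0 0
    have h2 : Ph 0 + 0 = Ph 0 + Ph 0 := by rw [add_zero]; simpa using h
    exact (add_left_cancel h2).symm
  let plin : V →ₗ[ℝ] V :=
    { toFun := Ph
      map_add' := fun u v => by simpa using hPh_lin 1 u v
      map_smul' := fun c u => by simpa [hPh0] using hPh_lin c u 0 }
  have hplin : ∀ u, plin u = Ph u := fun u => rfl
  clear_value plin
  -- nonnegativity of lamh i
  have ht0 : 0 ≤ lamh i := by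
    rw [hlamh i]
    apply Real.sInf_nonneg
    rintro x ⟨E, _, _, rfl⟩
    apply Real.sSup_nonneg
    rintro r ⟨u, _, _, rfl⟩
    exact div_nonneg (hanneg u) (hbnneg u)
  rw [hlam i]
  apply le_csInf
  · -- the continuous min-max set is nonempty
    have hle : i + 1 ≤ Module.finrank ℝ Vh := by omega
    let Bs := Module.finBasis ℝ Vh
    let v : Fin (i + 1) → V := fun j => (Bs (Fin.castLE hle j) : V)
    have hli : LinearIndependent ℝ v := by
      have h1 : LinearIndependent ℝ (fun j : Fin (i + 1) => Bs (Fin.castLE hle j)) :=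
        Bs.linearIndependent.comp _ (Fin.castLE_injective hle)
      exact h1.map' Vh.subtype Vh.ker_subtype
    refine ⟨_, ⟨Submodule.span ℝ (Set.range v), ?_, rfl⟩⟩
    rw [finrank_span_eq_card hli, Fintype.card_fin]
  · rintro s ⟨E, hErank, hsE⟩
    haveI hEfd : FiniteDimensional ℝ E :=
      Module.finite_of_finrank_pos (by rw [hErank]; omega)
    have bddE := LiuAux.rayleigh_bddAbove a b ha_bilin ha_symm hb_bilin hb_symm hb_pos E
    have hs0 : 0 ≤ s := by
      rw [hsE]
      apply Real.sSup_nonneg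
      rintro r ⟨u, _, _, rfl⟩
      exact div_nonneg (hanneg u) (hbnneg u)
    by_cases hker : ∃ u ∈ E, u ≠ 0 ∧ Ph u = 0
    · -- degenerate case: s ≥ 1/C²
      obtain ⟨u, huE, hune, hP0⟩ := hker
      have hau := ha_pos u hune
      have hbu := hb_pos u hune
      have herr' := herr u
      rw [hP0, sub_zero] at herr'
      have hCpos : 0 < C := by
        rcases lt_or_eq_of_le hC with h | h
        · exact h
        · exfalso
          rw [← h, zero_mul] at herr'
          have := Real.sqrt_pos.2 hbu
          linarith
      have hble : b u u ≤ C ^ 2 * a u u := by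
        nlinarith [mul_nonneg (sub_nonneg.2 herr')
            (by positivity : (0:ℝ) ≤ C * Real.sqrt (a u u) + Real.sqrt (b u u)),
          Real.sq_sqrt hbu.le, Real.sq_sqrt hau.le]
      have h1 : 1 / C ^ 2 ≤ a u u / b u u := by
        rw [div_le_div_iff₀ (by positivity) hbu]
        nlinarith
      have h2 : a u u / b u u ≤ s := by
        rw [hsE]
        exact le_csSup bddE ⟨u, huE, hune, rfl⟩
      have h3 : lamh i / (1 + C ^ 2 * lamh i) ≤ 1 / C ^ 2 := by
        rw [div_le_div_iff₀ (by positivity) (by positivity)]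
        nlinarith
      linarith
    · push_neg at hker
      set E' : Submodule ℝ V := E.map plin with hE'def
      have hE'le : E' ≤ Vh := by
        rintro x ⟨u, hu, rfl⟩
        rw [hplin]
        exact hPh_mem u
      have hkerg : LinearMap.ker (plin.comp E.subtype) = ⊥ := by
        rw [LinearMap.ker_eq_bot']
        intro m hm
        rw [LinearMap.comp_apply, hplin] at hm
        by_contra hm0
        have hmne : (m : V) ≠ 0 := fun h => hm0 (by exact_mod_cast h)
        exact hker (↑m) m.2 hmne hm
      have hrange : LinearMap.range (plin.comp E.subtype) = E' := by
        rw [LinearMap.range_comp, Submodule.range_subtype]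
      have hE'rank : Module.finrank ℝ E' = i + 1 := by
        have hrn := LinearMap.finrank_range_add_finrank_ker (plin.comp E.subtype)
        rw [hkerg, finrank_bot, hrange] at hrn
        omega
      haveI : FiniteDimensional ℝ E' :=
        Module.finite_of_finrank_pos (by rw [hE'rank]; omega)
      have bddE' := LiuAux.rayleigh_bddAbove a b ha_bilin ha_symm hb_bilin hb_symm hb_pos E'
      have hneE' : {r : ℝ | ∃ u ∈ E', u ≠ 0 ∧ r = a u u / b u u}.Nonempty :=
        LiuAux.rayleigh_nonempty a b E' (by rw [hE'rank]; omega)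
      have hts' : lamh i ≤ sSup {r : ℝ | ∃ u ∈ E', u ≠ 0 ∧ r = a u u / b u u} := by
        rw [hlamh i]
        apply csInf_le
        · refine ⟨0, ?_⟩
          rintro x ⟨F, _, _, rfl⟩
          apply Real.sSup_nonneg
          rintro r ⟨u, _, _, rfl⟩
          exact div_nonneg (hanneg u) (hbnneg u)
        · exact ⟨E', hE'le, hE'rank, rfl⟩
      have hpt : ∀ r ∈ {r : ℝ | ∃ u ∈ E', u ≠ 0 ∧ r = a u u / b u u},
          r / (1 + C ^ 2 * r) ≤ s := by
        rintro r ⟨w, hwE', hwne, rfl⟩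
        obtain ⟨u, huE, hwu⟩ := Submodule.mem_map.1 hwE'
        have hwPh : w = Ph u := by rw [← hwu, hplin]
        have hune : u ≠ 0 := by
          rintro rfl
          exact hwne (by rw [hwPh, hPh0])
        have hPune : Ph u ≠ 0 := by rw [← hwPh]; exact hwne
        have horth : a (u - Ph u) (Ph u) = 0 := hPh_orth u (Ph u) (hPh_mem u)
        have hue : u = Ph u + (u - Ph u) := by abel
        have hsplit : a u u = a (Ph u) (Ph u) + a (u - Ph u) (u - Ph u) := by
          conv_lhs => rw [hue]
          rw [LiuAux.expand_add a ha_bilin ha_symm]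
          rw [ha_symm (Ph u) (u - Ph u), horth]; ring
        have hbtri : b u u ≤ b (Ph u) (Ph u)
            + 2 * Real.sqrt (b (Ph u) (Ph u)) * Real.sqrt (b (u - Ph u) (u - Ph u))
            + b (u - Ph u) (u - Ph u) := by
          conv_lhs => rw [hue]
          rw [LiuAux.expand_add b hb_bilin hb_symm]
          have hcs := LiuAux.cauchy_schwarz b hb_bilin hb_symm hb_pos (Ph u) (u - Ph u)
          linarith
        have key := LiuAux.keylem C (a u u) (b u u) (a (Ph u) (Ph u)) (b (Ph u) (Ph u))
          (a (u - Ph u) (u - Ph u)) (b (u - Ph u) (u - Ph u)) hC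
          (ha_pos _ hPune) (hb_pos u hune) (hb_pos _ hPune)
          (hanneg _) (hbnneg _) hsplit (herr u) hbtri
        have hlast : a u u / b u u ≤ s := by
          rw [hsE]
          exact le_csSup bddE ⟨u, huE, hune, rfl⟩
        rw [hwPh]
        linarith
      by_cases hCs : C ^ 2 * s < 1
      · have hM : sSup {r : ℝ | ∃ u ∈ E', u ≠ 0 ∧ r = a u u / b u u}
            ≤ s / (1 - C ^ 2 * s) := by
          apply csSup_le hneE'
          intro r hr
          have h := hpt r hr
          have hr0 : 0 ≤ r := by
            obtain ⟨u, _, _, rfl⟩ := hr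
            exact div_nonneg (hanneg u) (hbnneg u)
          have h1 : (0:ℝ) < 1 + C ^ 2 * r := by positivity
          rw [div_le_iff₀ h1] at h
          rw [le_div_iff₀ (by linarith : (0:ℝ) < 1 - C ^ 2 * s)]
          nlinarith
        have ht' : lamh i ≤ s / (1 - C ^ 2 * s) := le_trans hts' hM
        have hfin := LiuAux.fmono C ht0 ht'
        have hd0 : (0:ℝ) < 1 - C ^ 2 * s := by linarith
        rw [LiuAux.collapse C s hd0] at hfin
        exact hfin
      · push_neg at hCs
        have hC0 : (0:ℝ) < C ^ 2 := by
          rcases eq_or_lt_of_le hC with h | h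
          · exfalso; rw [← h] at hCs; norm_num at hCs
          · positivity
        have hden : (0:ℝ) < 1 + C ^ 2 * lamh i := by
          nlinarith [mul_nonneg (sq_nonneg C) ht0]
        have h1 : lamh i / (1 + C ^ 2 * lamh i) ≤ 1 / C ^ 2 := by
          rw [div_le_div_iff₀ hden hC0]
          nlinarith
        have h2 : 1 / C ^ 2 ≤ s := by
          rw [div_le_iff₀ hC0]
          linarith
        linarith
end

section
/- Let Ω ⊂ ℝ³ be a bounded domain and V = {v ∈ (H₀¹(Ω))³ : div v = 0}. Let C_P be the Poincaré constant with ‖v‖_{L²} ≤ C_P ‖∇v‖_{L²} for all v ∈ V, and let û ∈ V ∩ (W^{1,∞}(Ω))³. Then for all u, v ∈ V, the bilinear estimate |((û·∇)u, v) + ((u·∇)û, v)| ≤ (3 C_P² ‖∇û‖_∞ + √3 C_P ‖û‖_∞) ‖∇u‖_{L²} ‖∇v‖_{L²} holds. -/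
open MeasureTheory
open scoped RealInnerProductSpace

noncomputable section

/-- Trilinear convection form `((w·∇)u)·v` at a point. -/
def convf (w u v : E3 → E3) (x : E3) : ℝ := ∑ j, w x j * ⟪pd u j x, v x⟫

/-- `H¹₀`-norm (gradient `L²`-norm) over `Ω`. -/
def gradNorm (Ω : Set E3) (u : E3 → E3) : ℝ := Real.sqrt (∫ x in Ω, gradDot u u x)

/-- `L²`-norm over `Ω`. -/
def l2Norm (Ω : Set E3) (u : E3 → E3) : ℝ := Real.sqrt (∫ x in Ω, ⟪u x, u x⟫)

lemma sum_le_sqrt3' (b : Fin 3 → ℝ) (hb : ∀ j, 0 ≤ b j) :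
    ∑ j, b j ≤ Real.sqrt 3 * Real.sqrt (∑ j, b j ^ 2) := by
  have h := sq_sum_le_card_mul_sum_sq (s := (Finset.univ : Finset (Fin 3))) (f := b)
  have hsq : (∑ j, b j) ^ 2 ≤ 3 * ∑ j, b j ^ 2 := by simpa using h
  have h0 : 0 ≤ ∑ j, b j := Finset.sum_nonneg fun j _ => hb j
  calc ∑ j, b j = Real.sqrt ((∑ j, b j) ^ 2) := (Real.sqrt_sq h0).symm
    _ ≤ Real.sqrt (3 * ∑ j, b j ^ 2) := Real.sqrt_le_sqrt hsq
    _ = Real.sqrt 3 * Real.sqrt (∑ j, b j ^ 2) := Real.sqrt_mul (by norm_num) _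

lemma sum_abs_le_sqrt3' (a : E3) : ∑ j, |a j| ≤ Real.sqrt 3 * ‖a‖ := by
  have h := sum_le_sqrt3' (fun j => |a j|) (fun j => abs_nonneg _)
  simpa [EuclideanSpace.norm_eq, Real.norm_eq_abs, sq_abs] using h

lemma pd_continuous' {u : E3 → E3} (hu : ContDiff ℝ 1 u) (j : Fin 3) :
    Continuous (pd u j) :=
  (hu.continuous_fderiv one_ne_zero).clm_apply continuous_const

lemma integrableOn_of_continuous' {Ω : Set E3} (hΩb : Bornology.IsBounded Ω)
    {f : E3 → ℝ} (hf : Continuous f) : IntegrableOn f Ω volume :=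
  (hf.continuousOn.integrableOn_compact hΩb.isCompact_closure).mono_set subset_closure

lemma memL2' {Ω : Set E3} (hΩm : MeasurableSet Ω) (hΩb : Bornology.IsBounded Ω)
    {f : E3 → ℝ} (hf : Continuous f) :
    MemLp f (ENNReal.ofReal 2) (volume.restrict Ω) := by
  haveI : Fact (volume Ω < ⊤) := ⟨hΩb.measure_lt_top⟩
  obtain ⟨C, hC⟩ := hΩb.isCompact_closure.exists_bound_of_continuousOn hf.continuousOn
  refine MemLp.of_bound (hf.aestronglyMeasurable.restrict) C ?_
  filter_upwards [ae_restrict_mem hΩm] with x hx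
  exact hC x (subset_closure hx)

lemma intCS' {Ω : Set E3} (hΩm : MeasurableSet Ω) (hΩb : Bornology.IsBounded Ω)
    {f g : E3 → ℝ} (hf : Continuous f) (hg : Continuous g)
    (hf0 : ∀ x, 0 ≤ f x) (hg0 : ∀ x, 0 ≤ g x) :
    ∫ x in Ω, f x * g x ≤ Real.sqrt (∫ x in Ω, f x ^ 2) * Real.sqrt (∫ x in Ω, g x ^ 2) := by
  have hpq : Real.HolderConjugate 2 2 := Real.holderConjugate_iff.mpr ⟨one_lt_two, by norm_num⟩
  have h := integral_mul_le_Lp_mul_Lq_of_nonneg (μ := volume.restrict Ω) hpq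
    (ae_of_all _ hf0) (ae_of_all _ hg0) (memL2' hΩm hΩb hf) (memL2' hΩm hΩb hg)
  have h2 : ∀ F : E3 → ℝ, (∫ x in Ω, F x ^ (2 : ℝ)) = ∫ x in Ω, F x ^ 2 := by
    intro F
    refine integral_congr_ae (ae_of_all _ fun x => ?_)
    have : F x ^ (2 : ℝ) = F x ^ (2 : ℕ) := by
      rw [show (2 : ℝ) = ((2 : ℕ) : ℝ) by norm_num, Real.rpow_natCast]
    simpa using this
  rw [h2, h2] at h
  rw [Real.sqrt_eq_rpow, Real.sqrt_eq_rpow]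
  exact h

lemma gradDot_eq_sum_sq (u : E3 → E3) (x : E3) :
    gradDot u u x = ∑ j, ‖pd u j x‖ ^ 2 :=
  Finset.sum_congr rfl fun j _ => real_inner_self_eq_norm_sq _

lemma gradDot_nonneg (u : E3 → E3) (x : E3) : 0 ≤ gradDot u u x := by
  rw [gradDot_eq_sum_sq]; positivity

lemma gradDot_continuous {u : E3 → E3} (hu : ContDiff ℝ 1 u) :
    Continuous (gradDot u u) := by
  unfold gradDot
  exact continuous_finset_sum _ fun j _ =>
    (pd_continuous' hu j).inner (pd_continuous' hu j)

lemma convf_continuous {w u v : E3 → E3} (hw : Continuous w) (hu : ContDiff ℝ 1 u)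
    (hv : Continuous v) : Continuous (convf w u v) := by
  unfold convf
  exact continuous_finset_sum _ fun j _ =>
    (((EuclideanSpace.proj j).continuous.comp hw).mul ((pd_continuous' hu j).inner hv))

lemma inner_eq_sum (a b : E3) : ⟪a, b⟫ = ∑ i, a i * b i := by
  simp [PiLp.inner_apply, RCLike.inner_apply, conj_trivial]
  exact Finset.sum_congr rfl fun i _ => mul_comm _ _

/-- The ν₂ estimate: for `uh ∈ V ∩ (W^{1,∞})³`,
`|((uh·∇)u, v) + ((u·∇)uh, v)| ≤ (3C_P²‖∇uh‖_∞ + √3 C_P‖uh‖_∞)‖∇u‖‖∇v‖`. -/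
theorem stmt_6 (Ω : Set E3) (hΩo : IsOpen Ω) (hΩb : Bornology.IsBounded Ω)
    (CP Mg Mu : ℝ) (hCP0 : 0 ≤ CP)
    (hP : ∀ v, memV Ω v → l2Norm Ω v ≤ CP * gradNorm Ω v)
    (uh : E3 → E3) (huh : memV Ω uh)
    (hMg : ∀ x ∈ Ω, ∀ i j : Fin 3, |pd uh j x i| ≤ Mg)
    (hMu : ∀ x ∈ Ω, ∀ i : Fin 3, |uh x i| ≤ Mu)
    (u v : E3 → E3) (hu : memV Ω u) (hv : memV Ω v) :
    |(∫ x in Ω, convf uh u v x) + ∫ x in Ω, convf u uh v x|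
      ≤ (3 * CP ^ 2 * Mg + Real.sqrt 3 * CP * Mu) * gradNorm Ω u * gradNorm Ω v := by
  rcases Set.eq_empty_or_nonempty Ω with hΩe | ⟨x₀, hx₀⟩
  · subst hΩe
    simp [gradNorm, Measure.restrict_empty]
  have hΩm : MeasurableSet Ω := hΩo.measurableSet
  have hMg0 : 0 ≤ Mg := le_trans (abs_nonneg _) (hMg x₀ hx₀ 0 0)
  have hMu0 : 0 ≤ Mu := le_trans (abs_nonneg _) (hMu x₀ hx₀ 0)
  have hs3 : (0:ℝ) ≤ Real.sqrt 3 := Real.sqrt_nonneg 3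
  -- continuity facts
  have hcu : Continuous u := hu.1.continuous
  have hcv : Continuous v := hv.1.continuous
  have hcuh : Continuous uh := huh.1.continuous
  -- the two convection integrands are continuous, hence integrable on Ω
  have hi1 : IntegrableOn (convf uh u v) Ω volume :=
    integrableOn_of_continuous' hΩb (convf_continuous hcuh hu.1 hcv)
  have hi2 : IntegrableOn (convf u uh v) Ω volume :=
    integrableOn_of_continuous' hΩb (convf_continuous hcu huh.1 hcv)
  -- auxiliary continuous functions
  set gu : E3 → ℝ := fun x => Real.sqrt (gradDot u u x) with hgu_def
  have hcgu : Continuous gu := Real.continuous_sqrt.comp (gradDot_continuous hu.1)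
  have hcnu : Continuous (fun x => ‖u x‖) := hcu.norm
  have hcnv : Continuous (fun x => ‖v x‖) := hcv.norm
  -- pointwise bound on Ω
  have hpt : ∀ x ∈ Ω, |convf uh u v x + convf u uh v x|
      ≤ Real.sqrt 3 * Mu * (gu x * ‖v x‖) + 3 * Mg * (‖u x‖ * ‖v x‖) := by
    intro x hx
    have hb1 : |convf uh u v x| ≤ Real.sqrt 3 * Mu * (gu x * ‖v x‖) := by
      calc |convf uh u v x| ≤ ∑ j, Mu * (‖pd u j x‖ * ‖v x‖) := by
            refine (Finset.abs_sum_le_sum_abs _ _).trans (Finset.sum_le_sum fun j _ => ?_)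
            rw [abs_mul]
            exact mul_le_mul (hMu x hx j) (abs_real_inner_le_norm _ _) (abs_nonneg _) hMu0
        _ = Mu * ((∑ j, ‖pd u j x‖) * ‖v x‖) := by
            rw [Finset.sum_mul, Finset.mul_sum]
        _ ≤ Mu * ((Real.sqrt 3 * Real.sqrt (∑ j, ‖pd u j x‖ ^ 2)) * ‖v x‖) := by
            refine mul_le_mul_of_nonneg_left (mul_le_mul_of_nonneg_right ?_ (norm_nonneg _)) hMu0
            exact sum_le_sqrt3' _ fun j => norm_nonneg _
        _ = Real.sqrt 3 * Mu * (gu x * ‖v x‖) := by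
            rw [hgu_def]; simp only []
            rw [gradDot_eq_sum_sq]; ring
    have hb2 : |convf u uh v x| ≤ 3 * Mg * (‖u x‖ * ‖v x‖) := by
      have hinn : ∀ j : Fin 3, |⟪pd uh j x, v x⟫| ≤ Mg * ∑ i, |v x i| := by
        intro j
        rw [inner_eq_sum]
        calc |∑ i, pd uh j x i * v x i| ≤ ∑ i, |pd uh j x i * v x i| :=
              Finset.abs_sum_le_sum_abs _ _
          _ ≤ ∑ i, Mg * |v x i| := by
              refine Finset.sum_le_sum fun i _ => ?_
              rw [abs_mul]
              exact mul_le_mul_of_nonneg_right (hMg x hx i j) (abs_nonneg _)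
          _ = Mg * ∑ i, |v x i| := (Finset.mul_sum _ _ _).symm
      have h33 : Real.sqrt 3 * Real.sqrt 3 = 3 := Real.mul_self_sqrt (by norm_num)
      calc |convf u uh v x| ≤ ∑ j, |u x j| * (Mg * ∑ i, |v x i|) := by
            refine (Finset.abs_sum_le_sum_abs _ _).trans (Finset.sum_le_sum fun j _ => ?_)
            rw [abs_mul]
            exact mul_le_mul_of_nonneg_left (hinn j) (abs_nonneg _)
        _ = (∑ j, |u x j|) * (Mg * ∑ i, |v x i|) := by rw [Finset.sum_mul]
        _ ≤ (Real.sqrt 3 * ‖u x‖) * (Mg * (Real.sqrt 3 * ‖v x‖)) := by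
            refine mul_le_mul (sum_abs_le_sqrt3' _) ?_ ?_ (by positivity)
            · exact mul_le_mul_of_nonneg_left (sum_abs_le_sqrt3' _) hMg0
            · positivity
        _ = (Real.sqrt 3 * Real.sqrt 3) * Mg * (‖u x‖ * ‖v x‖) := by ring
        _ = 3 * Mg * (‖u x‖ * ‖v x‖) := by rw [h33]
    exact (abs_add_le _ _).trans (add_le_add hb1 hb2)
  -- put the two integrals together
  rw [← integral_add hi1 hi2]
  -- bound |∫ F| by ∫ G
  set G : E3 → ℝ := fun x =>
    Real.sqrt 3 * Mu * (gu x * ‖v x‖) + 3 * Mg * (‖u x‖ * ‖v x‖) with hG_def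
  have hcG : Continuous G := by
    apply Continuous.add
    · exact continuous_const.mul (hcgu.mul hcnv)
    · exact continuous_const.mul (hcnu.mul hcnv)
  have hiG : IntegrableOn G Ω volume := integrableOn_of_continuous' hΩb hcG
  have step1 : |∫ x in Ω, (convf uh u v x + convf u uh v x)| ≤ ∫ x in Ω, G x := by
    have hn := norm_integral_le_integral_norm (μ := volume.restrict Ω)
      (f := fun x => convf uh u v x + convf u uh v x)
    simp only [Real.norm_eq_abs] at hn
    refine hn.trans ?_
    refine integral_mono_of_nonneg (ae_of_all _ fun x => abs_nonneg _) hiG ?_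
    filter_upwards [ae_restrict_mem hΩm] with x hx
    exact hpt x hx
  -- integrability of the two products
  have hig1 : IntegrableOn (fun x => gu x * ‖v x‖) Ω volume :=
    integrableOn_of_continuous' hΩb (hcgu.mul hcnv)
  have hig2 : IntegrableOn (fun x => ‖u x‖ * ‖v x‖) Ω volume :=
    integrableOn_of_continuous' hΩb (hcnu.mul hcnv)
  have step2 : ∫ x in Ω, G x
      = Real.sqrt 3 * Mu * (∫ x in Ω, gu x * ‖v x‖)
        + 3 * Mg * ∫ x in Ω, ‖u x‖ * ‖v x‖ := by
    rw [hG_def]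
    rw [integral_add (hig1.const_mul _) (hig2.const_mul _), integral_const_mul, integral_const_mul]
  -- Cauchy–Schwarz for each
  have hcs1 : ∫ x in Ω, gu x * ‖v x‖ ≤ gradNorm Ω u * l2Norm Ω v := by
    have h := intCS' hΩm hΩb hcgu hcnv (fun x => Real.sqrt_nonneg _) (fun x => norm_nonneg _)
    have e1 : (∫ x in Ω, gu x ^ 2) = ∫ x in Ω, gradDot u u x :=
      integral_congr_ae (ae_of_all _ fun x => Real.sq_sqrt (gradDot_nonneg u x))
    have e2 : (∫ x in Ω, ‖v x‖ ^ 2) = ∫ x in Ω, ⟪v x, v x⟫ :=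
      integral_congr_ae (ae_of_all _ fun x => (real_inner_self_eq_norm_sq _).symm)
    rw [e1, e2] at h
    exact h
  have hcs2 : ∫ x in Ω, ‖u x‖ * ‖v x‖ ≤ l2Norm Ω u * l2Norm Ω v := by
    have h := intCS' hΩm hΩb hcnu hcnv (fun x => norm_nonneg _) (fun x => norm_nonneg _)
    have e1 : (∫ x in Ω, ‖u x‖ ^ 2) = ∫ x in Ω, ⟪u x, u x⟫ :=
      integral_congr_ae (ae_of_all _ fun x => (real_inner_self_eq_norm_sq _).symm)
    have e2 : (∫ x in Ω, ‖v x‖ ^ 2) = ∫ x in Ω, ⟪v x, v x⟫ :=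
      integral_congr_ae (ae_of_all _ fun x => (real_inner_self_eq_norm_sq _).symm)
    rw [e1, e2] at h
    exact h
  -- Poincaré
  have hPu : l2Norm Ω u ≤ CP * gradNorm Ω u := hP u hu
  have hPv : l2Norm Ω v ≤ CP * gradNorm Ω v := hP v hv
  have hgu0 : 0 ≤ gradNorm Ω u := Real.sqrt_nonneg _
  have hgv0 : 0 ≤ gradNorm Ω v := Real.sqrt_nonneg _
  have hlv0 : 0 ≤ l2Norm Ω v := Real.sqrt_nonneg _
  have hlu0 : 0 ≤ l2Norm Ω u := Real.sqrt_nonneg _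
  calc |∫ x in Ω, (convf uh u v x + convf u uh v x)|
      ≤ ∫ x in Ω, G x := step1
    _ = Real.sqrt 3 * Mu * (∫ x in Ω, gu x * ‖v x‖)
        + 3 * Mg * ∫ x in Ω, ‖u x‖ * ‖v x‖ := step2
    _ ≤ Real.sqrt 3 * Mu * (gradNorm Ω u * l2Norm Ω v)
        + 3 * Mg * (l2Norm Ω u * l2Norm Ω v) := by
        have h1 : (0:ℝ) ≤ Real.sqrt 3 * Mu := by positivity
        have h2 : (0:ℝ) ≤ 3 * Mg := by positivity
        exact add_le_add (mul_le_mul_of_nonneg_left hcs1 h1) (mul_le_mul_of_nonneg_left hcs2 h2)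
    _ ≤ Real.sqrt 3 * Mu * (gradNorm Ω u * (CP * gradNorm Ω v))
        + 3 * Mg * ((CP * gradNorm Ω u) * (CP * gradNorm Ω v)) := by
        have h1 : (0:ℝ) ≤ Real.sqrt 3 * Mu := by positivity
        have h2 : (0:ℝ) ≤ 3 * Mg := by positivity
        have h3 : (0:ℝ) ≤ CP * gradNorm Ω u := by positivity
        refine add_le_add ?_ ?_
        · exact mul_le_mul_of_nonneg_left (mul_le_mul_of_nonneg_left hPv hgu0) h1
        · exact mul_le_mul_of_nonneg_left (mul_le_mul hPu hPv hlv0 h3) h2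
    _ = (3 * CP ^ 2 * Mg + Real.sqrt 3 * CP * Mu) * gradNorm Ω u * gradNorm Ω v := by
        ring
end
end
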